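/- arXiv:1402.2034 — 4 statements merged into one kernel-verified Lean document; each statement's English description precedes it below -/
import Mathlib

section
/- For every 231-avoiding permutation π, applying the relabeling λ_π to every label of the decreasing tree T_in(π) produces the decreasing tree T_in(P(π)); in particular λ_π(T_in(π)) is again a decreasing tree. -/
/-- Stack sorting with fuel (fuel = length always suffices). -/
def stackSortAux : ℕ → List ℕ → List ℕ
  | 0, _ => []
  | _ + 1, [] => []
  | fuel + 1, x :: xs =>
    let l := x :: xs
    let m := l.foldr max 0
    stackSortAux fuel (l.takeWhile (· ≠ m)) ++
      stackSortAux fuel ((l.dropWhile (· ≠ m)).tail) ++ [m]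

/-- The stack sorting operator `S`: `S(ε) = ε` and `S(α n β) = S(α) S(β) n`
where `n` is the maximum element. -/
def stackSort (l : List ℕ) : List ℕ := stackSortAux l.length l

/-- `σ` avoids the pattern 231. -/
def Avoids231 (σ : List ℕ) : Prop :=
  ¬ ∃ i j k, i < j ∧ j < k ∧ k < σ.length ∧
      σ.getD k 0 < σ.getD i 0 ∧ σ.getD i 0 < σ.getD j 0

/-- `σ` avoids the pattern 132. -/
def Avoids132 (σ : List ℕ) : Prop :=
  ¬ ∃ i j k, i < j ∧ j < k ∧ k < σ.length ∧
      σ.getD i 0 < σ.getD k 0 ∧ σ.getD k 0 < σ.getD j 0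

/-- Binary trees with natural number labels. -/
inductive BTree where
  | leaf : BTree
  | node : BTree → ℕ → BTree → BTree

def BTree.inorder : BTree → List ℕ
  | .leaf => []
  | .node l n r => l.inorder ++ [n] ++ r.inorder

def BTree.postorder : BTree → List ℕ
  | .leaf => []
  | .node l n r => l.postorder ++ r.postorder ++ [n]

/-- A tree is decreasing when labels strictly decrease from root to leaves. -/
def BTree.Decreasing : BTree → Prop
  | .leaf => True
  | .node l n r =>
      l.Decreasing ∧ r.Decreasing ∧
      (∀ x ∈ l.inorder, x < n) ∧ (∀ x ∈ r.inorder, x < n)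

/-- The underlying unlabeled shape of a tree (labels replaced by `0`). -/
def BTree.shape : BTree → BTree
  | .leaf => .leaf
  | .node l _ r => .node l.shape 0 r.shape

def BTree.map (f : ℕ → ℕ) : BTree → BTree
  | .leaf => .leaf
  | .node l n r => .node (l.map f) (f n) (r.map f)

/-- Labels on the rightmost branch from the root. -/
def BTree.rightBranch : BTree → List ℕ
  | .leaf => []
  | .node _ n r => n :: r.rightBranch

/-- Labels on the leftmost branch from the root. -/
def BTree.leftBranch : BTree → List ℕ
  | .leaf => []
  | .node l n _ => n :: l.leftBranch

def TinAux : ℕ → List ℕ → BTree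
  | 0, _ => .leaf
  | _ + 1, [] => .leaf
  | fuel + 1, x :: xs =>
    let l := x :: xs
    let m := l.foldr max 0
    .node (TinAux fuel (l.takeWhile (· ≠ m))) m
          (TinAux fuel ((l.dropWhile (· ≠ m)).tail))

/-- The decreasing binary tree whose in-order reading is `l`. -/
def Tin (l : List ℕ) : BTree := TinAux l.length l

def PpermAux : ℕ → List ℕ → List ℕ
  | 0, _ => []
  | _ + 1, [] => []
  | fuel + 1, x :: xs =>
    let l := x :: xs
    let m := l.foldr max 0
    let α := l.takeWhile (· ≠ m)
    let β := (l.dropWhile (· ≠ m)).tail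
    (PpermAux fuel α).map (· + β.length) ++ [m] ++
      PpermAux fuel (β.map (· - α.length))

/-- The bijection `P` from 231-avoiding to 132-avoiding permutations,
`P(ε) = ε` and `P(α ⊕ (1 ⊖ β)) = (P(α) ⊕ 1) ⊖ P(β)`. -/
def Pperm (l : List ℕ) : List ℕ := PpermAux l.length l

/-- Direct sum of permutations: `α ⊕ β`. -/
def osum (α β : List ℕ) : List ℕ := α ++ β.map (· + α.length)

/-- Skew sum of permutations: `α ⊖ β`. -/
def ossum (α β : List ℕ) : List ℕ := α.map (· + β.length) ++ β

def lrP : ℕ → List ℕ × List ℕ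
  | 0 => ([], [])
  | m + 1 => (ossum [1] (lrP m).2, osum (lrP m).1 [1])

/-- `λ_n`: `λ_{m+1} = 1 ⊖ ρ_m`. -/
def lamP (n : ℕ) : List ℕ := (lrP n).1

/-- `ρ_n`: `ρ_{m+1} = λ_m ⊕ 1`. -/
def rhoP (n : ℕ) : List ℕ := (lrP n).2

/-- `s` and `p` are order isomorphic lists. -/
def OrderIsoList (s p : List ℕ) : Prop :=
  s.length = p.length ∧
  ∀ i j, i < s.length → j < s.length →
    (s.getD i 0 < s.getD j 0 ↔ p.getD i 0 < p.getD j 0)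

/-- `σ` contains the pattern `π`. -/
def Contains (σ π : List ℕ) : Prop :=
  ∃ s : List ℕ, s.Sublist σ ∧ OrderIsoList s π

/-- The up-down word of a permutation (`true` = ascent `u`, `false` = descent `d`). -/
def updown (l : List ℕ) : List Bool :=
  (l.zip l.tail).map (fun p => decide (p.1 < p.2))

/-- No value larger than `max x y` occurs (strictly) between `x` and `y` in `l`. -/
def NoLargerBetween (l : List ℕ) (x y : ℕ) : Prop :=
  ∀ i j k, i < j → j < k → k < l.length →
    ((l.getD i 0 = x ∧ l.getD k 0 = y) ∨ (l.getD i 0 = y ∧ l.getD k 0 = x)) →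
    l.getD j 0 ≤ max x y

/-- The basic operators: stack sorting `S` and reversal `R`. -/
inductive SOp where
  | s : SOp
  | r : SOp

def applyOp : SOp → List ℕ → List ℕ
  | .s => stackSort
  | .r => List.reverse

/-- A composition of operators from `{S, R}`. -/
def applyOps (ops : List SOp) : List ℕ → List ℕ :=
  ops.foldr (fun op f => applyOp op ∘ f) id

/-- `i` is the position of a left-to-right maximum of `l`. -/
def LRmaxPos (l : List ℕ) (i : ℕ) : Prop :=
  i < l.length ∧ ∀ j, j < i → l.getD j 0 < l.getD i 0

/-- `i` is the position of a right-to-left maximum of `l`. -/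
def RLmaxPos (l : List ℕ) (i : ℕ) : Prop :=
  i < l.length ∧ ∀ j, i < j → j < l.length → l.getD j 0 < l.getD i 0

/-- The reverse Zeilberger statistic: the largest `k` such that
`(n-k+1) … (n-1) n` is a subword of `l`, where `n = l.length`. -/
noncomputable def Rzeil (l : List ℕ) : ℕ :=
  sSup {k | (List.range' (l.length - k + 1) k).Sublist l}
namespace Aux

open List

lemma le_foldrMax {l : List ℕ} {x : ℕ} (hx : x ∈ l) : x ≤ l.foldr max 0 := by
  induction l with
  | nil => cases hx
  | cons a t ih =>
    rcases List.mem_cons.mp hx with h | h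
    · subst h; exact le_max_left _ _
    · exact le_trans (ih h) (le_max_right _ _)

lemma foldrMax_mem {l : List ℕ} (h : l ≠ []) : l.foldr max 0 ∈ l := by
  induction l with
  | nil => simp at h
  | cons a t ih =>
    rcases eq_or_ne t [] with rfl | ht
    · simp
    · simp only [List.foldr_cons]
      rcases max_cases a (t.foldr max 0) with ⟨h1, _⟩ | ⟨h1, _⟩
      · rw [h1]; exact mem_cons_self
      · rw [h1]; exact mem_cons_of_mem a (ih ht)

lemma foldrMax_eq {l : List ℕ} {m : ℕ} (hm : m ∈ l) (hub : ∀ x ∈ l, x ≤ m) :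
    l.foldr max 0 = m := by
  have h1 : l ≠ [] := ne_nil_of_mem hm
  exact le_antisymm (hub _ (foldrMax_mem h1)) (le_foldrMax hm)

lemma takeWhile_ne_eq {X Y : List ℕ} {n : ℕ} (h : ∀ x ∈ X, x ≠ n) :
    (X ++ n :: Y).takeWhile (· ≠ n) = X := by
  induction X with
  | nil => simp [List.takeWhile]
  | cons a t ih =>
    have ha : a ≠ n := h a mem_cons_self
    rw [cons_append, List.takeWhile_cons_of_pos (by simpa using ha),
      ih (fun x hx => h x (mem_cons_of_mem a hx))]

lemma dropWhile_ne_eq {X Y : List ℕ} {n : ℕ} (h : ∀ x ∈ X, x ≠ n) :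
    (X ++ n :: Y).dropWhile (· ≠ n) = n :: Y := by
  induction X with
  | nil => simp [List.dropWhile]
  | cons a t ih =>
    have ha : a ≠ n := h a mem_cons_self
    rw [cons_append, List.dropWhile_cons_of_pos (by simpa using ha),
      ih (fun x hx => h x (mem_cons_of_mem a hx))]

/-- Decomposition of a nonempty list at its maximum. -/
lemma decomp (l : List ℕ) (h : l ≠ []) :
    l = l.takeWhile (· ≠ l.foldr max 0) ++ l.foldr max 0 ::
        (l.dropWhile (· ≠ l.foldr max 0)).tail := by
  set m := l.foldr max 0 with hm
  have hmem : m ∈ l := foldrMax_mem h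
  have hd : l.dropWhile (· ≠ m) ≠ [] := by
    intro he
    rw [List.dropWhile_eq_nil_iff] at he
    have := he m hmem
    simp at this
  have hhead : (l.dropWhile (· ≠ m)).head hd = m := by
    have := List.head_dropWhile_not (fun x => decide (x ≠ m)) hd
    simpa using this
  have h2 := List.cons_head_tail hd
  rw [hhead] at h2
  conv_lhs => rw [← List.takeWhile_append_dropWhile (p := (· ≠ m)) (l := l)]
  rw [h2]

lemma decomp_len {l : List ℕ} (h : l ≠ []) :
    (l.takeWhile (· ≠ l.foldr max 0)).length + 1 +
      ((l.dropWhile (· ≠ l.foldr max 0)).tail).length = l.length := by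
  conv_rhs => rw [decomp l h]
  simp; omega

end Aux
namespace Aux

open List

lemma sub_lens {l : List ℕ} (h : l ≠ []) :
    (l.takeWhile (· ≠ l.foldr max 0)).length < l.length ∧
    ((l.dropWhile (· ≠ l.foldr max 0)).tail).length < l.length := by
  have := decomp_len h
  omega

lemma TinAux_congr : ∀ (f1 : ℕ) (f2 : ℕ) (l : List ℕ), l.length ≤ f1 → l.length ≤ f2 →
    TinAux f1 l = TinAux f2 l := by
  intro f1
  induction f1 with
  | zero =>
    intro f2 l h1 _
    have : l = [] := List.eq_nil_of_length_eq_zero (Nat.le_zero.mp h1)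
    subst this
    cases f2 <;> rfl
  | succ f ih =>
    intro f2 l h1 h2
    match l, f2 with
    | [], 0 => rfl
    | [], g+1 => rfl
    | x :: xs, g+1 =>
      show TinAux (f+1) (x::xs) = TinAux (g+1) (x::xs)
      rw [TinAux, TinAux]
      have hne : (x :: xs) ≠ [] := by simp
      have hl := sub_lens hne
      simp only [List.length_cons] at hl
      simp only [List.length_cons] at h1 h2
      have e1 := ih g _ (by omega : ((x::xs).takeWhile (· ≠ (x::xs).foldr max 0)).length ≤ f) (by omega)
      have e2 := ih g _ (by omega : (((x::xs).dropWhile (· ≠ (x::xs).foldr max 0)).tail).length ≤ f) (by omega)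
      rw [e1, e2]

lemma Tin_eq (l : List ℕ) (h : l ≠ []) :
    Tin l = .node (Tin (l.takeWhile (· ≠ l.foldr max 0))) (l.foldr max 0)
                  (Tin ((l.dropWhile (· ≠ l.foldr max 0)).tail)) := by
  obtain ⟨x, xs, rfl⟩ := List.exists_cons_of_ne_nil h
  have hl := sub_lens h
  show TinAux (x::xs).length (x::xs) = _
  rw [show (x::xs).length = xs.length + 1 from rfl, TinAux]
  unfold Tin
  rw [TinAux_congr xs.length _ _ (by simpa using Nat.lt_succ_iff.mp hl.1) le_rfl,
      TinAux_congr xs.length _ _ (by simpa using Nat.lt_succ_iff.mp hl.2) le_rfl]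

lemma PpermAux_congr : ∀ (f1 : ℕ) (f2 : ℕ) (l : List ℕ), l.length ≤ f1 → l.length ≤ f2 →
    PpermAux f1 l = PpermAux f2 l := by
  intro f1
  induction f1 with
  | zero =>
    intro f2 l h1 _
    have : l = [] := List.eq_nil_of_length_eq_zero (Nat.le_zero.mp h1)
    subst this
    cases f2 <;> rfl
  | succ f ih =>
    intro f2 l h1 h2
    match l, f2 with
    | [], 0 => rfl
    | [], g+1 => rfl
    | x :: xs, g+1 =>
      show PpermAux (f+1) (x::xs) = PpermAux (g+1) (x::xs)
      rw [PpermAux, PpermAux]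
      have hne : (x :: xs) ≠ [] := by simp
      have hl := sub_lens hne
      simp only [List.length_cons] at hl
      simp only [List.length_cons] at h1 h2
      have e1 := ih g _ (by omega : ((x::xs).takeWhile (· ≠ (x::xs).foldr max 0)).length ≤ f) (by omega)
      have e2 := ih g ((((x::xs).dropWhile (· ≠ (x::xs).foldr max 0)).tail).map
          (· - ((x::xs).takeWhile (· ≠ (x::xs).foldr max 0)).length))
        (by simpa using (by omega : (((x::xs).dropWhile (· ≠ (x::xs).foldr max 0)).tail).length ≤ f))
        (by simpa using (by omega : (((x::xs).dropWhile (· ≠ (x::xs).foldr max 0)).tail).length ≤ g))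
      rw [e1, e2]

lemma Pperm_eq (l : List ℕ) (h : l ≠ []) :
    Pperm l = (Pperm (l.takeWhile (· ≠ l.foldr max 0))).map
        (· + ((l.dropWhile (· ≠ l.foldr max 0)).tail).length) ++ [l.foldr max 0] ++
      Pperm (((l.dropWhile (· ≠ l.foldr max 0)).tail).map
        (· - (l.takeWhile (· ≠ l.foldr max 0)).length)) := by
  obtain ⟨x, xs, rfl⟩ := List.exists_cons_of_ne_nil h
  have hl := sub_lens h
  show PpermAux (x::xs).length (x::xs) = _
  rw [show (x::xs).length = xs.length + 1 from rfl, PpermAux]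
  unfold Pperm
  rw [PpermAux_congr xs.length _ _ (by simpa using Nat.lt_succ_iff.mp hl.1) le_rfl,
      PpermAux_congr xs.length _ _ (by simpa using Nat.lt_succ_iff.mp hl.2) le_rfl]

end Aux
namespace Aux

open List

lemma Tin_inorder : ∀ n (l : List ℕ), l.length ≤ n → (Tin l).inorder = l := by
  intro n
  induction n with
  | zero =>
    intro l h
    have : l = [] := List.eq_nil_of_length_eq_zero (Nat.le_zero.mp h)
    subst this; rfl
  | succ n ih =>
    intro l h
    rcases eq_or_ne l [] with rfl | hne
    · rfl
    · rw [Tin_eq l hne, BTree.inorder]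
      have hl := sub_lens hne
      rw [ih _ (by omega), ih _ (by omega)]
      have := decomp l hne
      conv_rhs => rw [this]
      simp

lemma Tin_inorder' (l : List ℕ) : (Tin l).inorder = l := Tin_inorder l.length l le_rfl

lemma BTree.map_congr {f g : ℕ → ℕ} : ∀ {t : BTree},
    (∀ x ∈ t.inorder, f x = g x) → t.map f = t.map g := by
  intro t
  induction t with
  | leaf => intro _; rfl
  | node l n r ihl ihr =>
    intro h
    simp only [BTree.inorder, List.mem_append, List.mem_singleton] at h
    rw [BTree.map, BTree.map, ihl (fun x hx => h x (Or.inl (Or.inl hx))),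
        ihr (fun x hx => h x (Or.inr hx)), h n (Or.inl (Or.inr rfl))]

lemma BTree.map_map (f g : ℕ → ℕ) : ∀ (t : BTree), (t.map f).map g = t.map (g ∘ f) := by
  intro t
  induction t with
  | leaf => rfl
  | node l n r ihl ihr => simp [BTree.map, ihl, ihr]

lemma BTree.inorder_map (f : ℕ → ℕ) : ∀ (t : BTree), (t.map f).inorder = t.inorder.map f := by
  intro t
  induction t with
  | leaf => rfl
  | node l n r ihl ihr => simp [BTree.map, BTree.inorder, ihl, ihr]

lemma foldrMax_map_add {l : List ℕ} (h : l ≠ []) (c : ℕ) :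
    (l.map (· + c)).foldr max 0 = l.foldr max 0 + c := by
  induction l with
  | nil => simp at h
  | cons a t ih =>
    rcases eq_or_ne t [] with rfl | ht
    · simp
    · simp only [List.map_cons, List.foldr_cons, ih ht]
      omega

lemma takeWhile_map_add (l : List ℕ) (c m : ℕ) :
    (l.map (· + c)).takeWhile (· ≠ m + c) = (l.takeWhile (· ≠ m)).map (· + c) := by
  rw [List.takeWhile_map]
  have : ((fun x => decide (x ≠ m + c)) ∘ fun x => x + c) = (fun x => decide (x ≠ m)) := by
    funext x; simp
  rw [this]

lemma dropWhile_map_add (l : List ℕ) (c m : ℕ) :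
    (l.map (· + c)).dropWhile (· ≠ m + c) = (l.dropWhile (· ≠ m)).map (· + c) := by
  rw [List.dropWhile_map]
  have : ((fun x => decide (x ≠ m + c)) ∘ fun x => x + c) = (fun x => decide (x ≠ m)) := by
    funext x; simp
  rw [this]

lemma TinAux_map_add : ∀ n (l : List ℕ) (c : ℕ), l.length ≤ n →
    TinAux n (l.map (· + c)) = (TinAux n l).map (· + c) := by
  intro n
  induction n with
  | zero =>
    intro l c h
    have : l = [] := List.eq_nil_of_length_eq_zero (Nat.le_zero.mp h)
    subst this; rfl
  | succ n ih =>
    intro l c h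
    rcases eq_or_ne l [] with rfl | hne
    · rfl
    · obtain ⟨x, xs, rfl⟩ := List.exists_cons_of_ne_nil hne
      have hl := sub_lens hne
      simp only [List.length_cons] at hl h
      rw [show (x::xs).map (· + c) = (x+c) :: xs.map (· + c) from rfl, TinAux, TinAux]
      rw [show ((x+c) :: xs.map (· + c)) = (x::xs).map (· + c) from rfl]
      rw [foldrMax_map_add hne c, takeWhile_map_add, dropWhile_map_add, ← List.map_tail]
      rw [ih _ c (by omega), ih _ c (by omega)]
      rfl

lemma Tin_map_add (l : List ℕ) (c : ℕ) :
    Tin (l.map (· + c)) = (Tin l).map (· + c) := by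
  unfold Tin
  rw [List.length_map]
  exact TinAux_map_add l.length l c le_rfl

lemma Pperm_length : ∀ n (l : List ℕ), l.length ≤ n → (PpermAux n l).length = l.length := by
  intro n
  induction n with
  | zero =>
    intro l h
    have : l = [] := List.eq_nil_of_length_eq_zero (Nat.le_zero.mp h)
    subst this; rfl
  | succ n ih =>
    intro l h
    rcases eq_or_ne l [] with rfl | hne
    · rfl
    · obtain ⟨x, xs, rfl⟩ := List.exists_cons_of_ne_nil hne
      have hl := sub_lens hne
      have hlen := decomp_len hne
      simp only [List.length_cons] at hl h hlen
      rw [PpermAux]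
      simp only [List.length_append, List.length_map, List.length_singleton]
      rw [ih _ (by omega), ih _ (by rw [List.length_map]; omega)]
      simp only [List.length_map, List.length_cons]
      omega

lemma Pperm_length' (l : List ℕ) : (Pperm l).length = l.length :=
  Pperm_length l.length l le_rfl

lemma Decreasing_map_add {t : BTree} (c : ℕ) (h : t.Decreasing) :
    (t.map (· + c)).Decreasing := by
  induction t with
  | leaf => trivial
  | node l n r ihl ihr =>
    obtain ⟨h1, h2, h3, h4⟩ := h
    refine ⟨ihl h1, ihr h2, ?_, ?_⟩ <;>
    · intro x hx
      rw [BTree.inorder_map] at hx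
      obtain ⟨y, hy, rfl⟩ := List.mem_map.mp hx
      have := h3 y; have := h4 y
      first
        | (exact Nat.add_lt_add_right (h3 y hy) c)
        | (exact Nat.add_lt_add_right (h4 y hy) c)

end Aux
namespace Aux

open List

lemma range'_map_add : ∀ (a s t : ℕ), (List.range' s a).map (· + t) = List.range' (s+t) a := by
  intro a
  induction a with
  | zero => intro s t; rfl
  | succ a ih =>
    intro s t
    rw [List.range'_succ, List.range'_succ, List.map_cons, ih,
      show s + 1 + t = s + t + 1 from by omega]

lemma range'_map_sub : ∀ (b s t : ℕ), (List.range' (s + t) b).map (· - t) = List.range' s b := by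
  intro b
  induction b with
  | zero => intro s t; rfl
  | succ b ih =>
    intro s t
    rw [List.range'_succ, List.range'_succ, List.map_cons,
      show s + t + 1 = (s + 1) + t from by omega, ih,
      show s + t - t = s from by omega]

lemma getD_map_lt (f : ℕ → ℕ) (l : List ℕ) {i : ℕ} (h : i < l.length) :
    (l.map f).getD i 0 = f (l.getD i 0) := by
  rw [List.getD_eq_getElem _ _ (by simpa using h), List.getD_eq_getElem _ _ h,
    List.getElem_map]

end Aux
namespace Aux

open List

lemma master : ∀ n : ℕ, ∀ π : List ℕ, π.length = n → π.Perm (List.range' 1 n) → Avoids231 π →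
    (Pperm π).Perm (List.range' 1 n) ∧
    ∀ lam : ℕ → ℕ, (∀ i, i < n → lam (π.getD i 0) = (Pperm π).getD i 0) →
      (Tin π).map lam = Tin (Pperm π) ∧ ((Tin π).map lam).Decreasing := by
  intro n
  induction n using Nat.strong_induction_on with
  | _ n ih =>
    intro π hlen hperm havoid
    rcases Nat.eq_zero_or_pos n with rfl | hn
    · have hπ : π = [] := List.eq_nil_of_length_eq_zero hlen
      subst hπ
      exact ⟨by rfl, fun lam _ => ⟨rfl, trivial⟩⟩
    -- π is nonempty
    have hne : π ≠ [] := List.ne_nil_of_length_pos (by rw [hlen]; exact hn)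
    have hub : ∀ x ∈ π, x ≤ n := by
      intro x hx
      have := (List.mem_range'_1).mp (hperm.mem_iff.mp hx)
      omega
    have hlb : ∀ x ∈ π, 1 ≤ x := by
      intro x hx
      have := (List.mem_range'_1).mp (hperm.mem_iff.mp hx)
      omega
    have hnmem : n ∈ π := by
      apply hperm.mem_iff.mpr
      rw [List.mem_range'_1]
      omega
    have hm : π.foldr max 0 = n := foldrMax_eq hnmem hub
    set α := π.takeWhile (· ≠ n) with hα
    set β := (π.dropWhile (· ≠ n)).tail with hβ
    set a := α.length with ha
    set b := β.length with hb
    have hdec : π = α ++ n :: β := by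
      have := decomp π hne
      rw [hm] at this
      exact this
    have habn : a + 1 + b = n := by
      have h0 := decomp_len hne
      rw [hm, ← hα, ← hβ, hlen] at h0
      omega
    have hnd : π.Nodup := hperm.symm.nodup (by simp [List.nodup_range'])
    have hnα : ∀ x ∈ α, x ≠ n := by
      intro x hx
      simpa using List.mem_takeWhile_imp hx
    have hnβ : n ∉ β := by
      rw [hdec] at hnd
      have := (List.nodup_append.mp hnd).2.1
      exact (List.nodup_cons.mp this).1
    have hαπ : ∀ x ∈ α, x ∈ π := by
      intro x hx; rw [hdec]; exact List.mem_append_left _ hx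
    have hβπ : ∀ x ∈ β, x ∈ π := by
      intro x hx; rw [hdec]; exact List.mem_append_right _ (List.mem_cons_of_mem _ hx)
    -- getD values
    have hgetα : ∀ i, i < a → π.getD i 0 = α.getD i 0 := by
      intro i hi
      rw [hdec]
      exact List.getD_append _ _ _ _ hi
    have hgetn : π.getD a 0 = n := by
      rw [hdec, List.getD_append_right _ _ _ _ (le_refl a)]
      simp [ha]
    have hgetβ : ∀ i, i < b → π.getD (a + 1 + i) 0 = β.getD i 0 := by
      intro i hi
      rw [hdec, List.getD_append_right _ _ _ _ (by omega : α.length ≤ a + 1 + i)]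
      have : a + 1 + i - α.length = i + 1 := by omega
      rw [this]
      simp
    -- cross inequality
    have hcross : ∀ x ∈ α, ∀ y ∈ β, x < y := by
      intro x hx y hy
      obtain ⟨i, hi, hix⟩ := List.mem_iff_getElem.mp hx
      obtain ⟨k, hk, hky⟩ := List.mem_iff_getElem.mp hy
      have hxv : π.getD i 0 = x := by
        rw [hgetα i hi, List.getD_eq_getElem _ _ hi, hix]
      have hyv : π.getD (a + 1 + k) 0 = y := by
        rw [hgetβ k hk, List.getD_eq_getElem _ _ hk, hky]
      have hxn : x < n := lt_of_le_of_ne (hub x (hαπ x hx)) (hnα x hx)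
      have hxy : x ≠ y := by
        rw [hdec] at hnd
        intro h; subst h
        exact (List.disjoint_of_nodup_append hnd) hx (List.mem_cons_of_mem _ hy)
      by_contra hcon
      push_neg at hcon
      have hyx : y < x := lt_of_le_of_ne hcon (Ne.symm hxy)
      exact havoid ⟨i, a, a + 1 + k, by omega, by omega, by omega,
        by rw [hxv, hyv]; exact hyx, by rw [hxv, hgetn]; exact hxn⟩
    have hndα : α.Nodup := by
      rw [hdec] at hnd; exact (List.nodup_append.mp hnd).1
    have hndβ : β.Nodup := by
      rw [hdec] at hnd
      exact (List.nodup_cons.mp (List.nodup_append.mp hnd).2.1).2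
    -- value ranges
    have hβlow : ∀ y ∈ β, a + 1 ≤ y := by
      intro y hy
      have hsub : α.toFinset ⊆ Finset.Ico 1 y := by
        intro x hx
        rw [List.mem_toFinset] at hx
        rw [Finset.mem_Ico]
        exact ⟨hlb x (hαπ x hx), hcross x hx y hy⟩
      have hcard := Finset.card_le_card hsub
      rw [List.toFinset_card_of_nodup hndα, Nat.card_Ico] at hcard
      have hy1 := hlb y (hβπ y hy)
      omega
    have hαhigh : ∀ x ∈ α, x ≤ a := by
      intro x hx
      have hsub : β.toFinset ⊆ Finset.Ioo x n := by
        intro y hy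
        rw [List.mem_toFinset] at hy
        rw [Finset.mem_Ioo]
        exact ⟨hcross x hx y hy, lt_of_le_of_ne (hub y (hβπ y hy)) (fun h => hnβ (h ▸ hy))⟩
      have hcard := Finset.card_le_card hsub
      rw [List.toFinset_card_of_nodup hndβ, Nat.card_Ioo] at hcard
      have hx1 := hub x (hαπ x hx)
      have hx2 := hnα x hx
      rcases Nat.lt_or_ge a x with hax | hax
      · exfalso
        have : x ≤ n := hx1
        have : x ≠ n := hx2
        omega
      · exact hax
    -- α is a permutation of range' 1 a
    have hαperm : α.Perm (List.range' 1 a) := by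
      apply List.perm_of_nodup_nodup_toFinset_eq hndα (by simp [List.nodup_range'])
      apply Finset.eq_of_subset_of_card_le
      · intro x hx
        rw [List.mem_toFinset] at hx ⊢
        rw [List.mem_range'_1]
        exact ⟨hlb x (hαπ x hx), by have := hαhigh x hx; omega⟩
      · rw [List.toFinset_card_of_nodup hndα,
          List.toFinset_card_of_nodup (by simp [List.nodup_range'])]
        simp [ha]
    have hβperm : β.Perm (List.range' (a+1) b) := by
      apply List.perm_of_nodup_nodup_toFinset_eq hndβ (by simp [List.nodup_range'])
      apply Finset.eq_of_subset_of_card_le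
      · intro y hy
        rw [List.mem_toFinset] at hy ⊢
        rw [List.mem_range'_1]
        refine ⟨hβlow y hy, ?_⟩
        have h1 := hub y (hβπ y hy)
        have h2 : y ≠ n := fun h => hnβ (h ▸ hy)
        omega
      · rw [List.toFinset_card_of_nodup hndβ,
          List.toFinset_card_of_nodup (by simp [List.nodup_range'])]
        simp [hb]
    set β' := β.map (· - a) with hβ'
    have hβ'len : β'.length = b := by simp [hβ', hb]
    have hββ' : β = β'.map (· + a) := by
      symm
      rw [hβ', List.map_map]
      have he : List.map ((fun x => x + a) ∘ fun x => x - a) β = List.map id β := by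
        apply List.map_congr_left
        intro y hy
        have := hβlow y hy
        simp only [Function.comp_apply, id_eq]
        omega
      rw [he, List.map_id]
    have hβ'perm : β'.Perm (List.range' 1 b) := by
      have h1 := hβperm.map (· - a)
      rw [show a + 1 = 1 + a by omega, range'_map_sub b 1 a] at h1
      exact h1
    have hgetβ' : ∀ i, i < b → β'.getD i 0 = β.getD i 0 - a := by
      intro i hi
      rw [hβ']
      exact getD_map_lt _ _ hi
    -- avoidance for α
    have hα231 : Avoids231 α := by
      rintro ⟨i, j, k, hij, hjk, hk, h1, h2⟩
      refine havoid ⟨i, j, k, hij, hjk, by omega, ?_, ?_⟩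
      · rw [hgetα i (by omega), hgetα k (by omega)]; exact h1
      · rw [hgetα i (by omega), hgetα j (by omega)]; exact h2
    -- avoidance for β'
    have hβ'231 : Avoids231 β' := by
      rintro ⟨i, j, k, hij, hjk, hk, h1, h2⟩
      rw [hβ'len] at hk
      have hβbd : ∀ t, t < b → a + 1 ≤ β.getD t 0 := by
        intro t ht
        apply hβlow
        rw [List.getD_eq_getElem _ _ ht]
        exact List.getElem_mem _
      rw [hgetβ' k (by omega), hgetβ' i (by omega)] at h1
      rw [hgetβ' i (by omega), hgetβ' j (by omega)] at h2
      have bi := hβbd i (by omega)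
      have bj := hβbd j (by omega)
      have bk := hβbd k (by omega)
      refine havoid ⟨a + 1 + i, a + 1 + j, a + 1 + k, by omega, by omega, by omega, ?_, ?_⟩
      · rw [hgetβ i (by omega), hgetβ k (by omega)]; omega
      · rw [hgetβ i (by omega), hgetβ j (by omega)]; omega
    -- induction hypotheses
    obtain ⟨hPαperm, IHα⟩ := ih a (by omega) α rfl hαperm hα231
    obtain ⟨hPβ'perm, IHβ'⟩ := ih b (by omega) β' hβ'len hβ'perm hβ'231
    set X := (Pperm α).map (· + b) with hX
    set Y := Pperm β' with hY
    have hXlen : X.length = a := by rw [hX, List.length_map, Pperm_length']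
    have hYlen : Y.length = b := by rw [hY, Pperm_length', hβ'len]
    have hPπ : Pperm π = X ++ [n] ++ Y := by
      have := Pperm_eq π hne
      rw [hm] at this
      rw [this, hX, hY, ← hα, ← hβ, ← ha, ← hb, ← hβ']
    have hXmem : ∀ x ∈ X, 1 + b ≤ x ∧ x ≤ a + b := by
      intro x hx
      rw [hX] at hx
      obtain ⟨p, hp, rfl⟩ := List.mem_map.mp hx
      have := List.mem_range'_1.mp (hPαperm.mem_iff.mp hp)
      omega
    have hYmem : ∀ y ∈ Y, 1 ≤ y ∧ y ≤ b := by
      intro y hy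
      have := List.mem_range'_1.mp (hPβ'perm.mem_iff.mp hy)
      omega
    have hXne : ∀ x ∈ X, x ≠ n := by
      intro x hx
      have := hXmem x hx
      omega
    -- Pperm π is a permutation of range' 1 n
    have hPperm : (Pperm π).Perm (List.range' 1 n) := by
      rw [hPπ]
      have hXp : X.Perm (List.range' (1+b) a) := by
        rw [hX]
        have := hPαperm.map (· + b)
        rw [range'_map_add a 1 b] at this
        exact this
      have h1 : (X ++ [n] ++ Y).Perm (Y ++ (X ++ [n])) := List.perm_append_comm
      have h2 : (Y ++ (X ++ [n])).Perm
          (List.range' 1 b ++ (List.range' (1+b) a ++ [n])) :=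
        hPβ'perm.append (hXp.append (List.Perm.refl [n]))
      have h3 : List.range' 1 b ++ (List.range' (1+b) a ++ [n]) = List.range' 1 n := by
        have e1 : List.range' (1+b) a ++ [n] = List.range' (1+b) (a+1) := by
          have h4 := List.range'_append (s := 1+b) (m := a) (n := 1) (step := 1)
          simp only [Nat.mul_one, Nat.one_mul] at h4
          rw [show List.range' (1 + b + a) 1 = [n] from by
            rw [show (List.range' (1+b+a) 1) = [1+b+a] from rfl]
            congr 1
            omega] at h4
          rw [show a + 1 = 1 + a from by omega]
          rwa [Nat.add_comm 1 a]
        rw [e1]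
        have h5 := List.range'_append (s := 1) (m := b) (n := a+1) (step := 1)
        simp only [Nat.mul_one, Nat.one_mul] at h5
        rw [h5, show b + (a + 1) = n from by omega]
      rw [h3] at h2
      exact h1.trans h2
    refine ⟨hPperm, ?_⟩
    -- the lam statement
    intro lam hlam
    have hlamα : ∀ i, i < a → lam (α.getD i 0) = (Pperm α).getD i 0 + b := by
      intro i hi
      have h1 := hlam i (by omega)
      rw [hgetα i hi, hPπ] at h1
      rw [List.getD_append _ _ _ _ (by rw [List.length_append, hXlen]; simp; omega)] at h1
      rw [List.getD_append _ _ _ _ (by rw [hXlen]; omega)] at h1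
      rw [h1, hX, getD_map_lt _ _ (by rw [Pperm_length']; exact hi)]
    have hlamn : lam n = n := by
      have h1 := hlam a (by omega)
      rw [hgetn, hPπ] at h1
      rw [List.getD_append _ _ _ _ (by rw [List.length_append, hXlen]; simp)] at h1
      rw [List.getD_append_right _ _ _ _ (by rw [hXlen])] at h1
      rw [hXlen] at h1
      simpa using h1
    have hlamβ : ∀ i, i < b → lam (β'.getD i 0 + a) = Y.getD i 0 := by
      intro i hi
      have h1 := hlam (a + 1 + i) (by omega)
      rw [hgetβ i hi, hPπ] at h1
      rw [List.getD_append_right _ _ _ _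
        (by rw [List.length_append, hXlen, List.length_singleton]; omega)] at h1
      rw [List.length_append, hXlen] at h1
      simp only [List.length_singleton] at h1
      rw [show a + 1 + i - (a + 1) = i by omega] at h1
      rw [← h1]
      congr 1
      rw [hgetβ' i hi]
      have : a + 1 ≤ β.getD i 0 := by
        apply hβlow
        rw [List.getD_eq_getElem _ _ (by omega : i < β.length)]
        exact List.getElem_mem _
      omega
    -- left subtree
    set g : ℕ → ℕ := fun x => lam x - b with hg
    have hgα : ∀ i, i < a → g (α.getD i 0) = (Pperm α).getD i 0 := by
      intro i hi
      rw [hg]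
      simp only
      rw [hlamα i hi]
      omega
    obtain ⟨e1, d1⟩ := IHα g hgα
    have hmapα : (Tin α).map lam = Tin X := by
      have step1 : (Tin α).map lam = (Tin α).map (fun x => g x + b) := by
        apply BTree.map_congr
        intro x hx
        rw [Tin_inorder'] at hx
        obtain ⟨i, hi, rfl⟩ := List.mem_iff_getElem.mp hx
        rw [← List.getD_eq_getElem _ 0 hi]
        rw [hg]
        simp only
        rw [hlamα i hi]
        omega
      rw [step1, show (fun x => g x + b) = ((· + b) ∘ g) from rfl,
        ← BTree.map_map g (· + b) (Tin α), e1, ← Tin_map_add, ← hX]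
    -- right subtree
    set g' : ℕ → ℕ := fun x => lam (x + a) with hg'
    have hgβ' : ∀ i, i < b → g' (β'.getD i 0) = (Pperm β').getD i 0 := by
      intro i hi
      rw [hg']
      simp only
      rw [hlamβ i hi, hY]
    obtain ⟨e2, d2⟩ := IHβ' g' hgβ'
    have hmapβ : (Tin β).map lam = Tin Y := by
      conv_lhs => rw [hββ', Tin_map_add]
      rw [BTree.map_map (· + a) lam (Tin β')]
      rw [show (lam ∘ (· + a)) = g' from rfl, e2]
    -- assemble
    have hTπ : Tin π = .node (Tin α) n (Tin β) := by
      have := Tin_eq π hne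
      rw [hm] at this
      rw [this]
    have hPne : Pperm π ≠ [] := by
      intro h
      have := Pperm_length' π
      rw [h, hlen] at this
      simp at this
      omega
    have hTP : Tin (Pperm π) = .node (Tin X) n (Tin Y) := by
      have hXY : Pperm π = X ++ n :: Y := by rw [hPπ]; simp
      have hmax : (Pperm π).foldr max 0 = n := by
        apply foldrMax_eq
        · rw [hXY]; exact List.mem_append_right _ (List.mem_cons_self)
        · intro x hx
          rw [hXY] at hx
          rcases List.mem_append.mp hx with h | h
          · have := hXmem x h; omega
          · rcases List.mem_cons.mp h with rfl | h
            · exact le_refl x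
            · have := hYmem x h; omega
      have := Tin_eq (Pperm π) hPne
      rw [hmax] at this
      rw [this]
      rw [hXY, takeWhile_ne_eq hXne, dropWhile_ne_eq hXne]
      simp
    constructor
    · rw [hTπ, hTP]
      show BTree.node ((Tin α).map lam) (lam n) ((Tin β).map lam) = _
      rw [hmapα, hmapβ, hlamn]
    · rw [hTπ]
      show (BTree.node ((Tin α).map lam) (lam n) ((Tin β).map lam)).Decreasing
      rw [hmapα, hmapβ, hlamn]
      refine ⟨?_, ?_, ?_, ?_⟩
      · have hTX : Tin X = (Tin (Pperm α)).map (· + b) := by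
          rw [hX, Tin_map_add]
        rw [hTX]
        exact Decreasing_map_add b (e1 ▸ d1)
      · exact e2 ▸ d2
      · intro x hx
        rw [Tin_inorder'] at hx
        have := hXmem x hx
        omega
      · intro y hy
        rw [Tin_inorder'] at hy
        have := hYmem y hy
        omega

end Aux
/-- applying the relabeling `λ_π` to `T_in(π)` yields
`T_in(P(π))`; in particular the result is a decreasing tree. -/
theorem relabel_Tin :
    ∀ π : List ℕ, π.Perm (List.range' 1 π.length) → Avoids231 π →
      ∀ lam : ℕ → ℕ,
        (∀ i, i < π.length → lam (π.getD i 0) = (Pperm π).getD i 0) →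
        (Tin π).map lam = Tin (Pperm π) ∧ ((Tin π).map lam).Decreasing := by
  intro π hperm havoid lam hlam
  exact (Aux.master π.length π rfl hperm havoid).2 lam hlam
end

section
/- For any composition A of the operators S and R, there is a size-preserving bijection between the set of permutations sorted by S ∘ A and the set of permutations sorted by S ∘ R ∘ A; in particular these two sets contain equally many permutations of each length n. -/
namespace SB

/-- size of a binary tree -/
def tsize : BTree → ℕ
  | .leaf => 0
  | .node l _ r => tsize l + tsize r + 1

lemma foldr_max_mem (l : List ℕ) (h : l ≠ []) : l.foldr max 0 ∈ l := by
  induction l with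
  | nil => simp at h
  | cons x xs ih =>
    rcases eq_or_ne xs [] with rfl | hxs
    · simp
    · rcases max_choice x (xs.foldr max 0) with h1 | h1 <;> simp [List.foldr, h1]
      right; exact ih hxs

lemma foldr_max_le (l : List ℕ) (x : ℕ) (hx : x ∈ l) : x ≤ l.foldr max 0 := by
  induction l with
  | nil => simp at hx
  | cons y ys ih =>
    rcases List.mem_cons.1 hx with rfl | h
    · simp [List.foldr]
    · simp only [List.foldr]
      exact le_max_of_le_right (ih h)

lemma foldr_max_eq (α β : List ℕ) (m : ℕ) (hm : ∀ x ∈ α ++ m :: β, x ≤ m) :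
    (α ++ m :: β).foldr max 0 = m := by
  have h1 : (α ++ m :: β).foldr max 0 ∈ α ++ m :: β := foldr_max_mem _ (by simp)
  have h2 := hm _ h1
  have h3 : m ≤ (α ++ m :: β).foldr max 0 := foldr_max_le _ _ (by simp)
  omega

lemma takeWhile_spec (α β : List ℕ) (m : ℕ) (hα : ∀ x ∈ α, x ≠ m) :
    (α ++ m :: β).takeWhile (· ≠ m) = α ∧ (α ++ m :: β).dropWhile (· ≠ m) = m :: β := by
  induction α with
  | nil => constructor <;> simp [List.takeWhile, List.dropWhile]
  | cons a as ih =>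
    have ha : a ≠ m := hα a (by simp)
    have ih2 := ih (fun x hx => hα x (by simp [hx]))
    constructor
    · rw [show a :: as ++ m :: β = a :: (as ++ m :: β) from rfl,
          List.takeWhile_cons_of_pos (p := fun x => decide (x ≠ m)) (by simpa using ha), ih2.1]
    · rw [show a :: as ++ m :: β = a :: (as ++ m :: β) from rfl,
          List.dropWhile_cons_of_pos (p := fun x => decide (x ≠ m)) (by simpa using ha), ih2.2]

lemma takeWhile_length_lt (l : List ℕ) (m : ℕ) (hm : m ∈ l) :
    (l.takeWhile (· ≠ m)).length < l.length := by
  have hle : (l.takeWhile (· ≠ m)).length ≤ l.length := (List.takeWhile_sublist _).length_le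
  rcases lt_or_eq_of_le hle with h | h
  · exact h
  · exfalso
    have := List.takeWhile_eq_self_iff.1 (List.Sublist.eq_of_length (List.takeWhile_sublist _) h)
    have h2 := this _ hm
    simp at h2

lemma dropWhile_tail_length (l : List ℕ) (p : ℕ → Bool) :
    ((l.dropWhile p).tail).length ≤ l.length - 1 := by
  have h1 : (l.dropWhile p).length ≤ l.length := (List.dropWhile_sublist _).length_le
  have h2 := List.length_tail (l := l.dropWhile p)
  omega

lemma stackSortAux_fuel : ∀ f (l : List ℕ), l.length ≤ f → stackSortAux f l = stackSort l := by
  intro f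
  induction f using Nat.strong_induction_on with
  | _ f ih =>
    intro l hl
    match f, l with
    | 0, [] => rfl
    | f+1, [] => rfl
    | f+1, x :: xs =>
      have hm : (x::xs).foldr max 0 ∈ x :: xs := foldr_max_mem _ (by simp)
      have hlen1 : ((x::xs).takeWhile (· ≠ (x::xs).foldr max 0)).length ≤ xs.length := by
        have := takeWhile_length_lt (x::xs) _ hm
        simp only [List.length_cons] at this ⊢
        omega
      have hlen2 : (((x::xs).dropWhile (· ≠ (x::xs).foldr max 0)).tail).length ≤ xs.length := by
        have := dropWhile_tail_length (x::xs) (fun y => y ≠ (x::xs).foldr max 0)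
        simpa using this
      simp only [List.length_cons] at hl
      show stackSortAux (f+1) (x::xs) = stackSortAux (xs.length+1) (x::xs)
      simp only [stackSortAux]
      rw [ih f (by omega) _ (le_trans hlen1 (by omega)),
          ih f (by omega) _ (le_trans hlen2 (by omega))]
      by_cases hxf : xs.length + 1 ≤ f + 1
      · rw [ih xs.length (by omega) _ hlen1, ih xs.length (by omega) _ hlen2]
      · omega

lemma TinAux_fuel : ∀ f (l : List ℕ), l.length ≤ f → TinAux f l = Tin l := by
  intro f
  induction f using Nat.strong_induction_on with
  | _ f ih =>
    intro l hl
    match f, l with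
    | 0, [] => rfl
    | f+1, [] => rfl
    | f+1, x :: xs =>
      have hm : (x::xs).foldr max 0 ∈ x :: xs := foldr_max_mem _ (by simp)
      have hlen1 : ((x::xs).takeWhile (· ≠ (x::xs).foldr max 0)).length ≤ xs.length := by
        have := takeWhile_length_lt (x::xs) _ hm
        simp only [List.length_cons] at this ⊢
        omega
      have hlen2 : (((x::xs).dropWhile (· ≠ (x::xs).foldr max 0)).tail).length ≤ xs.length := by
        have := dropWhile_tail_length (x::xs) (fun y => y ≠ (x::xs).foldr max 0)
        simpa using this
      simp only [List.length_cons] at hl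
      show TinAux (f+1) (x::xs) = TinAux (xs.length+1) (x::xs)
      simp only [TinAux]
      rw [ih f (by omega) _ (le_trans hlen1 (by omega)),
          ih f (by omega) _ (le_trans hlen2 (by omega)),
          ih xs.length (by omega) _ hlen1, ih xs.length (by omega) _ hlen2]

/-- The key decomposition lemma for `stackSort` and `Tin`. -/
lemma decomp (α β : List ℕ) (m : ℕ) (hα : ∀ x ∈ α, x ≠ m)
    (hm : ∀ x ∈ α ++ m :: β, x ≤ m) :
    stackSort (α ++ m :: β) = stackSort α ++ stackSort β ++ [m] ∧
    Tin (α ++ m :: β) = .node (Tin α) m (Tin β) := by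
  have hfold := foldr_max_eq α β m hm
  have hTW := takeWhile_spec α β m hα
  obtain ⟨x, xs, hxxs⟩ : ∃ x xs, α ++ m :: β = x :: xs := by
    cases h : α ++ m :: β with
    | nil => exact absurd h (by simp)
    | cons x xs => exact ⟨x, xs, rfl⟩
  have hlen : (α ++ m :: β).length = xs.length + 1 := by rw [hxxs]; rfl
  have hlenα : α.length ≤ xs.length := by
    have : (α ++ m :: β).length = α.length + β.length + 1 := by simp; omega
    omega
  have hlenβ : β.length ≤ xs.length := by
    have : (α ++ m :: β).length = α.length + β.length + 1 := by simp; omega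
    omega
  constructor
  · show stackSortAux (α ++ m :: β).length (α ++ m :: β) = _
    rw [hlen, hxxs]
    simp only [stackSortAux]
    rw [← hxxs, hfold, hTW.1, hTW.2]
    simp only [List.tail_cons]
    rw [stackSortAux_fuel _ _ hlenα, stackSortAux_fuel _ _ hlenβ]
  · show TinAux (α ++ m :: β).length (α ++ m :: β) = _
    rw [hlen, hxxs]
    simp only [TinAux]
    rw [← hxxs, hfold, hTW.1, hTW.2]
    simp only [List.tail_cons]
    rw [TinAux_fuel _ _ hlenα, TinAux_fuel _ _ hlenβ]

end SB
namespace SB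

lemma exists_decomp (l : List ℕ) (hl : l ≠ []) :
    ∃ α m β, l = α ++ m :: β ∧ (∀ x ∈ α, x ≠ m) ∧ (∀ x ∈ l, x ≤ m) ∧
      stackSort l = stackSort α ++ stackSort β ++ [m] ∧
      Tin l = .node (Tin α) m (Tin β) := by
  set m := l.foldr max 0 with hm
  have hmem : m ∈ l := foldr_max_mem l hl
  have hsplit := (List.takeWhile_append_dropWhile (p := (· ≠ m)) (l := l)).symm
  set α := l.takeWhile (· ≠ m) with hα
  set d := l.dropWhile (· ≠ m) with hd
  have hdne : d ≠ [] := by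
    intro h
    have : α = l := by rw [hsplit, h, List.append_nil]
    have h2 := List.mem_takeWhile_imp (l := l) (p := (· ≠ m)) (this ▸ hmem)
    simp at h2
  obtain ⟨y, ys, hys⟩ : ∃ y ys, d = y :: ys := by
    cases h : d with
    | nil => exact absurd h hdne
    | cons y ys => exact ⟨y, ys, rfl⟩
  have hy : y = m := by
    have h0 := List.head?_dropWhile_not (fun x => decide (x ≠ m)) l
    rw [← hd, hys] at h0
    simpa using h0
  have hαm : ∀ x ∈ α, x ≠ m := by
    intro x hx
    have := List.mem_takeWhile_imp hx
    simpa using this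
  have hle : ∀ x ∈ l, x ≤ m := fun x hx => foldr_max_le l x hx
  have hls : l = α ++ m :: ys := by rw [hsplit, hys, hy]
  have hd2 := decomp α ys m hαm (hls ▸ hle)
  exact ⟨α, m, ys, hls, hαm, hle, by rw [hls]; exact hd2.1, by rw [hls]; exact hd2.2⟩

lemma inorder_Tin (l : List ℕ) : (Tin l).inorder = l := by
  suffices h : ∀ n (l : List ℕ), l.length = n → (Tin l).inorder = l from h _ l rfl
  intro n
  induction n using Nat.strong_induction_on with
  | _ n ih =>
    intro l hn
    rcases eq_or_ne l [] with rfl | hl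
    · rfl
    · obtain ⟨α, m, β, hls, -, -, -, hT⟩ := exists_decomp l hl
      have hlen : l.length = α.length + β.length + 1 := by rw [hls]; simp; omega
      rw [hT]
      show (Tin α).inorder ++ [m] ++ (Tin β).inorder = l
      rw [ih α.length (by omega) α rfl, ih β.length (by omega) β rfl, hls]
      simp

lemma postorder_Tin (l : List ℕ) : (Tin l).postorder = stackSort l := by
  suffices h : ∀ n (l : List ℕ), l.length = n → (Tin l).postorder = stackSort l from h _ l rfl
  intro n
  induction n using Nat.strong_induction_on with
  | _ n ih =>
    intro l hn
    rcases eq_or_ne l [] with rfl | hl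
    · rfl
    · obtain ⟨α, m, β, hls, -, -, hS, hT⟩ := exists_decomp l hl
      have hlen : l.length = α.length + β.length + 1 := by rw [hls]; simp; omega
      rw [hT, hS]
      show (Tin α).postorder ++ (Tin β).postorder ++ [m] = _
      rw [ih α.length (by omega) α rfl, ih β.length (by omega) β rfl]

lemma stackSort_perm (l : List ℕ) : (stackSort l).Perm l := by
  suffices h : ∀ n (l : List ℕ), l.length = n → (stackSort l).Perm l from h _ l rfl
  intro n
  induction n using Nat.strong_induction_on with
  | _ n ih =>
    intro l hn
    rcases eq_or_ne l [] with rfl | hl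
    · rfl
    · obtain ⟨α, m, β, hls, -, -, hS, -⟩ := exists_decomp l hl
      have hlen : l.length = α.length + β.length + 1 := by rw [hls]; simp; omega
      rw [hS, hls]
      have p1 := ih α.length (by omega) α rfl
      have p2 := ih β.length (by omega) β rfl
      have h1 : (stackSort α ++ stackSort β ++ [m]).Perm (α ++ (β ++ [m])) := by
        rw [List.append_assoc]
        exact p1.append (p2.append (List.Perm.refl _))
      have h2 : (β ++ [m]).Perm (m :: β) := by
        have := List.perm_append_comm (l₁ := β) (l₂ := [m])
        simpa using this
      exact h1.trans ((List.Perm.refl α).append h2)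

lemma tsize_inorder (T : BTree) : T.inorder.length = tsize T := by
  induction T with
  | leaf => rfl
  | node l n r ihl ihr => simp [BTree.inorder, tsize, ihl, ihr]; omega

lemma tsize_postorder (T : BTree) : T.postorder.length = tsize T := by
  induction T with
  | leaf => rfl
  | node l n r ihl ihr => simp [BTree.postorder, tsize, ihl, ihr]; omega

lemma tsize_Tin (l : List ℕ) : tsize (Tin l) = l.length := by
  rw [← tsize_inorder, inorder_Tin]

lemma inorder_perm_postorder (T : BTree) : T.inorder.Perm T.postorder := by
  induction T with
  | leaf => rfl
  | node l n r ihl ihr =>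
    show (l.inorder ++ [n] ++ r.inorder).Perm (l.postorder ++ r.postorder ++ [n])
    have h1 : (l.inorder ++ [n] ++ r.inorder).Perm (l.inorder ++ (r.inorder ++ [n])) := by
      rw [List.append_assoc]
      refine (List.Perm.refl _).append ?_
      have := List.perm_append_comm (l₁ := [n]) (l₂ := r.inorder)
      simpa using this
    have h2 : (l.inorder ++ (r.inorder ++ [n])).Perm (l.postorder ++ (r.postorder ++ [n])) :=
      ihl.append (ihr.append (List.Perm.refl _))
    have h3 : l.postorder ++ (r.postorder ++ [n]) = l.postorder ++ r.postorder ++ [n] :=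
      (List.append_assoc _ _ _).symm
    exact (h1.trans h2).trans (h3 ▸ List.Perm.refl _)

lemma Tin_decreasing (l : List ℕ) (hnd : l.Nodup) : (Tin l).Decreasing := by
  suffices h : ∀ n (l : List ℕ), l.Nodup → l.length = n → (Tin l).Decreasing from h _ l hnd rfl
  intro n
  induction n using Nat.strong_induction_on with
  | _ n ih =>
    intro l hnd hn
    rcases eq_or_ne l [] with rfl | hl
    · trivial
    · obtain ⟨α, m, β, hls, hαm, hle, -, hT⟩ := exists_decomp l hl
      have hlen : l.length = α.length + β.length + 1 := by rw [hls]; simp; omega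
      have hndα : α.Nodup := (hls ▸ hnd).sublist (List.sublist_append_left _ _)
      have hndβ : β.Nodup := (hls ▸ hnd).sublist
        (List.Sublist.trans (List.sublist_cons_self _ _) (List.sublist_append_right α _))
      have hmβ : m ∉ β := by
        have h0 := hls ▸ hnd
        rw [List.nodup_append] at h0
        have h2 := h0.2.1
        simp only [List.nodup_cons] at h2
        exact h2.1
      rw [hT]
      refine ⟨ih α.length (by omega) α hndα rfl, ih β.length (by omega) β hndβ rfl, ?_, ?_⟩
      · intro x hx
        rw [inorder_Tin] at hx
        have h1 := hle x (by rw [hls]; simp [hx])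
        have h2 := hαm x hx
        omega
      · intro x hx
        rw [inorder_Tin] at hx
        have h1 := hle x (by rw [hls]; simp [hx])
        have h2 : x ≠ m := fun h => hmβ (h ▸ hx)
        omega

lemma Tin_inorder (T : BTree) (hd : T.Decreasing) : Tin T.inorder = T := by
  induction T with
  | leaf => rfl
  | node l n r ihl ihr =>
    obtain ⟨hdl, hdr, hln, hrn⟩ := hd
    show Tin (l.inorder ++ [n] ++ r.inorder) = _
    rw [List.append_assoc]
    have hd2 := decomp l.inorder r.inorder n
      (fun x hx => Nat.ne_of_lt (hln x hx))
      (by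
        intro x hx
        simp only [List.mem_append, List.mem_cons] at hx
        rcases hx with h | h | h
        · exact le_of_lt (hln x h)
        · omega
        · exact le_of_lt (hrn x h))
    rw [show l.inorder ++ ([n] ++ r.inorder) = l.inorder ++ n :: r.inorder from rfl, hd2.2,
        ihl hdl, ihr hdr]

/-- mirror of a binary tree -/
def mir : BTree → BTree
  | .leaf => .leaf
  | .node l n r => .node (mir r) n (mir l)

lemma mir_mir (T : BTree) : mir (mir T) = T := by
  induction T with
  | leaf => rfl
  | node l n r ihl ihr => simp [mir, ihl, ihr]

lemma shape_mir (T : BTree) : (mir T).shape = mir T.shape := by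
  induction T with
  | leaf => rfl
  | node l n r ihl ihr => simp [mir, BTree.shape, ihl, ihr]

lemma shape_shape (T : BTree) : T.shape.shape = T.shape := by
  induction T with
  | leaf => rfl
  | node l n r ihl ihr => simp [BTree.shape, ihl, ihr]

lemma tsize_shape (T : BTree) : tsize T.shape = tsize T := by
  induction T with
  | leaf => rfl
  | node l n r ihl ihr => simp [BTree.shape, tsize, ihl, ihr]

lemma Tin_reverse (l : List ℕ) (hnd : l.Nodup) : Tin l.reverse = mir (Tin l) := by
  suffices h : ∀ n (l : List ℕ), l.Nodup → l.length = n → Tin l.reverse = mir (Tin l) from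
    h _ l hnd rfl
  intro n
  induction n using Nat.strong_induction_on with
  | _ n ih =>
    intro l hnd hn
    rcases eq_or_ne l [] with rfl | hl
    · rfl
    · obtain ⟨α, m, β, hls, hαm, hle, -, hT⟩ := exists_decomp l hl
      have hlen : l.length = α.length + β.length + 1 := by rw [hls]; simp; omega
      have hndα : α.Nodup := (hls ▸ hnd).sublist (List.sublist_append_left _ _)
      have hndβ : β.Nodup := (hls ▸ hnd).sublist
        (List.Sublist.trans (List.sublist_cons_self _ _) (List.sublist_append_right α _))
      have hmβ : m ∉ β := by
        have h0 := hls ▸ hnd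
        rw [List.nodup_append] at h0
        have h2 := h0.2.1
        simp only [List.nodup_cons] at h2
        exact h2.1
      have hrev : l.reverse = β.reverse ++ m :: α.reverse := by
        rw [hls]; simp
      have hd2 := decomp β.reverse α.reverse m
        (by intro x hx; simp only [List.mem_reverse] at hx; exact fun h => hmβ (h ▸ hx))
        (by
          intro x hx
          rw [← hrev] at hx
          exact hle x (by simpa using hx))
      rw [hrev, hd2.2, hT]
      show _ = BTree.node (mir (Tin β)) m (mir (Tin α))
      rw [← ih β.length (by omega) β hndβ rfl, ← ih α.length (by omega) α hndα rfl]

end SB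
namespace SB

/-- Relabel the nodes of a tree shape `t` in postorder by the entries of `w`. -/
def postlabel : BTree → List ℕ → BTree
  | .leaf, _ => .leaf
  | .node l _ r, w =>
      .node (postlabel l (w.take (tsize l))) (w.getD (tsize l + tsize r) 0)
            (postlabel r ((w.drop (tsize l)).take (tsize r)))

lemma drop_singleton (w : List ℕ) (k : ℕ) (h : w.length = k + 1) :
    w.drop k = [w.getD k 0] := by
  have hk : k < w.length := by omega
  rw [List.drop_eq_getElem_cons hk]
  have : w.drop (k+1) = [] := List.drop_eq_nil_of_le (by omega)
  rw [this, List.getD_eq_getElem w 0 hk]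

lemma postorder_postlabel (t : BTree) (w : List ℕ) (hw : w.length = tsize t) :
    (postlabel t w).postorder = w := by
  induction t generalizing w with
  | leaf =>
    have hnil : w = [] := List.length_eq_zero_iff.1 hw
    subst hnil; rfl
  | node l n r ihl ihr =>
    simp only [tsize] at hw
    show (postlabel l (w.take (tsize l))).postorder ++
      (postlabel r ((w.drop (tsize l)).take (tsize r))).postorder ++ [w.getD (tsize l + tsize r) 0] = w
    rw [ihl _ (by rw [List.length_take]; omega),
        ihr _ (by rw [List.length_take, List.length_drop]; omega)]
    have h1 : w = w.take (tsize l) ++ w.drop (tsize l) := (List.take_append_drop _ _).symm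
    have h2 : w.drop (tsize l) = (w.drop (tsize l)).take (tsize r) ++ (w.drop (tsize l)).drop (tsize r) :=
      (List.take_append_drop _ _).symm
    have h3 : (w.drop (tsize l)).drop (tsize r) = w.drop (tsize l + tsize r) := by
      rw [List.drop_drop]; try ring_nf
    have h4 : w.drop (tsize l + tsize r) = [w.getD (tsize l + tsize r) 0] :=
      drop_singleton w _ (by omega)
    conv_rhs => rw [h1, h2, h3, h4]
    simp [List.append_assoc]

lemma shape_postlabel (t : BTree) (w : List ℕ) : (postlabel t w).shape = t.shape := by
  induction t generalizing w with
  | leaf => rfl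
  | node l n r ihl ihr => simp [postlabel, BTree.shape, ihl, ihr]

lemma tsize_pos_ne_leaf (t : BTree) : t ≠ .leaf → ∃ l n r, t = .node l n r := by
  intro h
  cases t with
  | leaf => exact absurd rfl h
  | node l n r => exact ⟨l, n, r, rfl⟩

lemma postlabel_shape_postorder (T : BTree) : postlabel T.shape T.postorder = T := by
  induction T with
  | leaf => rfl
  | node l n r ihl ihr =>
    show BTree.node
      (postlabel l.shape ((l.postorder ++ r.postorder ++ [n]).take (tsize l.shape)))
      ((l.postorder ++ r.postorder ++ [n]).getD (tsize l.shape + tsize r.shape) 0)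
      (postlabel r.shape (((l.postorder ++ r.postorder ++ [n]).drop (tsize l.shape)).take (tsize r.shape)))
      = BTree.node l n r
    have hsl : tsize l.shape = l.postorder.length := by rw [tsize_shape, tsize_postorder]
    have hsr : tsize r.shape = r.postorder.length := by rw [tsize_shape, tsize_postorder]
    have ht : (l.postorder ++ r.postorder ++ [n]).take (tsize l.shape) = l.postorder := by
      rw [hsl, List.append_assoc, List.take_left]
    have hd : (l.postorder ++ r.postorder ++ [n]).drop (tsize l.shape) = r.postorder ++ [n] := by
      rw [hsl, List.append_assoc, List.drop_left]
    have ht2 : ((l.postorder ++ r.postorder ++ [n]).drop (tsize l.shape)).take (tsize r.shape) =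
        r.postorder := by rw [hd, hsr, List.take_left]
    have hg : (l.postorder ++ r.postorder ++ [n]).getD (tsize l.shape + tsize r.shape) 0 = n := by
      rw [hsl, hsr, List.append_assoc,
          List.getD_append_right l.postorder (r.postorder ++ [n]) 0 _ (by omega),
          List.getD_append_right r.postorder [n] 0 _ (by omega)]
      simp
    rw [ht, ht2, hg, ihl, ihr]

lemma inorder_postlabel_perm (t : BTree) (w : List ℕ) (hw : w.length = tsize t) :
    (postlabel t w).inorder.Perm w := by
  have h := inorder_perm_postorder (postlabel t w)
  rwa [postorder_postlabel t w hw] at h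

lemma sorted_postlabel_decreasing (t : BTree) (w : List ℕ) (hw : w.length = tsize t)
    (hs : List.Pairwise (· < ·) w) : (postlabel t w).Decreasing := by
  induction t generalizing w with
  | leaf => trivial
  | node l n r ihl ihr =>
    simp only [tsize] at hw
    have hw1 : (w.take (tsize l)).length = tsize l := by rw [List.length_take]; omega
    have hw2 : ((w.drop (tsize l)).take (tsize r)).length = tsize r := by
      rw [List.length_take, List.length_drop]; omega
    have hs1 : List.Pairwise (· < ·) (w.take (tsize l)) := hs.sublist (List.take_sublist _ _)
    have hs2 : List.Pairwise (· < ·) ((w.drop (tsize l)).take (tsize r)) :=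
      hs.sublist ((List.take_sublist _ _).trans (List.drop_sublist _ _))
    have hroot : ∀ x ∈ w.take (tsize l + tsize r), x < w.getD (tsize l + tsize r) 0 := by
      intro x hx
      rw [List.mem_iff_getElem] at hx
      obtain ⟨i, hi, hx⟩ := hx
      rw [List.length_take] at hi
      have hi2 : i < w.length := by omega
      rw [List.getElem_take] at hx
      rw [List.getD_eq_getElem _ _ (show tsize l + tsize r < w.length by omega)]
      rw [← hx]
      exact List.pairwise_iff_getElem.1 hs i _ hi2 (by omega) (by omega)
    refine ⟨ihl _ hw1 hs1, ihr _ hw2 hs2, ?_, ?_⟩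
    · intro x hx
      have hx2 : x ∈ w.take (tsize l) := (inorder_postlabel_perm _ _ hw1).mem_iff.1 hx
      apply hroot
      have heq : w.take (tsize l) = (w.take (tsize l + tsize r)).take (tsize l) := by
        rw [List.take_take, min_eq_left (by omega)]
      exact List.mem_of_mem_take (heq ▸ hx2)
    · intro x hx
      have hx2 : x ∈ (w.drop (tsize l)).take (tsize r) :=
        (inorder_postlabel_perm _ _ hw2).mem_iff.1 hx
      rw [List.mem_iff_getElem] at hx2
      obtain ⟨i, hi, hx2⟩ := hx2
      rw [List.length_take, List.length_drop] at hi
      rw [List.getElem_take, List.getElem_drop] at hx2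
      apply hroot
      rw [← hx2, List.mem_iff_getElem]
      exact ⟨tsize l + i, by rw [List.length_take]; omega, by rw [List.getElem_take]⟩

end SB
namespace SB

lemma take_cons_pos (c : ℕ) (β : List ℕ) (j : ℕ) (h : 0 < j) :
    (c :: β).take j = c :: β.take (j-1) := by
  cases j with
  | zero => omega
  | succ j => simp

lemma drop_cons_pos (c : ℕ) (β : List ℕ) (j : ℕ) (h : 0 < j) :
    (c :: β).drop j = β.drop (j-1) := by
  cases j with
  | zero => omega
  | succ j => simp

lemma shape_Tin_length_eq {w w' : List ℕ} (h : (Tin w).shape = (Tin w').shape) :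
    w.length = w'.length := by
  have h2 := congrArg tsize h
  rwa [tsize_shape, tsize_shape, tsize_Tin, tsize_Tin] at h2

lemma Tin_eq_leaf_iff (l : List ℕ) : Tin l = BTree.leaf ↔ l = [] := by
  constructor
  · intro h
    have := inorder_Tin l
    rw [h] at this
    exact this.symm
  · rintro rfl; rfl

lemma shape_eq_leaf_iff (T : BTree) : T.shape = BTree.leaf ↔ T = BTree.leaf := by
  cases T with
  | leaf => exact ⟨fun _ => rfl, fun _ => rfl⟩
  | node l n r =>
    constructor <;> intro h
    · exact absurd h (by simp [BTree.shape])
    · exact absurd h (by simp)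

/-- The take/drop transfer lemma: the shape of the decreasing tree of any prefix or
suffix is determined by the shape of the decreasing tree of the whole list. -/
lemma take_drop_transfer : ∀ n (w w' : List ℕ), w.Nodup → w'.Nodup → w.length = n →
    (Tin w).shape = (Tin w').shape →
    (∀ k, (Tin (w.take k)).shape = (Tin (w'.take k)).shape) ∧
    (∀ k, (Tin (w.drop k)).shape = (Tin (w'.drop k)).shape) := by
  intro n
  induction n using Nat.strong_induction_on with
  | _ n ih =>
    intro w w' hnd hnd' hn hsh
    have hlen : w.length = w'.length := shape_Tin_length_eq hsh
    rcases eq_or_ne w [] with rfl | hw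
    · have : w' = [] := List.length_eq_zero_iff.1 (by simp at hlen; omega)
      subst this
      exact ⟨fun k => by simp, fun k => by simp⟩
    · have hw' : w' ≠ [] := by
        intro h; subst h; simp at hlen; exact hw (by simpa using hlen)
      obtain ⟨α, m, β, hls, hαm, hle, -, hT⟩ := exists_decomp w hw
      obtain ⟨α', m', β', hls', hαm', hle', -, hT'⟩ := exists_decomp w' hw'
      have hshw : (Tin w).shape = BTree.node (Tin α).shape 0 (Tin β).shape := by
        rw [hT]; rfl
      have hshw' : (Tin w').shape = BTree.node (Tin α').shape 0 (Tin β').shape := by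
        rw [hT']; rfl
      rw [hshw, hshw'] at hsh
      have hshα : (Tin α).shape = (Tin α').shape := by injection hsh
      have hshβ : (Tin β).shape = (Tin β').shape := by
        injection hsh with h1 h2 h3
      have hp : α.length = α'.length := shape_Tin_length_eq hshα
      have hq : β.length = β'.length := shape_Tin_length_eq hshβ
      have hlw : w.length = α.length + β.length + 1 := by rw [hls]; simp; omega
      have hndα : α.Nodup := (hls ▸ hnd).sublist (List.sublist_append_left _ _)
      have hndβ : β.Nodup := (hls ▸ hnd).sublist
        (List.Sublist.trans (List.sublist_cons_self _ _) (List.sublist_append_right α _))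
      have hndα' : α'.Nodup := (hls' ▸ hnd').sublist (List.sublist_append_left _ _)
      have hndβ' : β'.Nodup := (hls' ▸ hnd').sublist
        (List.Sublist.trans (List.sublist_cons_self _ _) (List.sublist_append_right α' _))
      have ihα := ih α.length (by omega) α α' hndα hndα' rfl hshα
      have ihβ := ih β.length (by omega) β β' hndβ hndβ' rfl hshβ
      constructor
      · intro k
        by_cases hk : k ≤ α.length
        · rw [hls, hls', List.take_append_of_le_length hk,
              List.take_append_of_le_length (by omega)]
          exact ihα.1 k
        · push_neg at hk
          have hk1 : k = α.length + (k - α.length) := by omega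
          have hk2 : k = α'.length + (k - α.length) := by omega
          have h1 : w.take k = α ++ m :: β.take (k - α.length - 1) := by
            conv_lhs => rw [hls, hk1]
            rw [List.take_append, take_cons_pos _ _ _ (by omega)]
            rw [List.take_of_length_le (by omega), Nat.add_sub_cancel_left]
          have h1' : w'.take k = α' ++ m' :: β'.take (k - α.length - 1) := by
            conv_lhs => rw [hls', hk2]
            rw [List.take_append, take_cons_pos _ _ _ (by omega)]
            rw [List.take_of_length_le (by omega), Nat.add_sub_cancel_left]
          have hd1 := decomp α (β.take (k - α.length - 1)) m hαm (by
            intro x hx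
            simp only [List.mem_append, List.mem_cons] at hx
            rcases hx with h | h | h
            · exact hle x (by rw [hls]; simp [h])
            · omega
            · exact hle x (by rw [hls]; simp [List.mem_of_mem_take h]))
          have hd1' := decomp α' (β'.take (k - α.length - 1)) m' hαm' (by
            intro x hx
            simp only [List.mem_append, List.mem_cons] at hx
            rcases hx with h | h | h
            · exact hle' x (by rw [hls']; simp [h])
            · omega
            · exact hle' x (by rw [hls']; simp [List.mem_of_mem_take h]))
          rw [h1, h1', hd1.2, hd1'.2]
          show BTree.node (Tin α).shape 0 (Tin (β.take (k - α.length - 1))).shape =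
               BTree.node (Tin α').shape 0 (Tin (β'.take (k - α.length - 1))).shape
          rw [hshα, ihβ.1 (k - α.length - 1)]
      · intro k
        by_cases hk : k ≤ α.length
        · have h1 : w.drop k = α.drop k ++ m :: β := by
            rw [hls, List.drop_append_of_le_length hk]
          have h1' : w'.drop k = α'.drop k ++ m' :: β' := by
            rw [hls', List.drop_append_of_le_length (by omega)]
          have hd1 := decomp (α.drop k) β m
            (fun x hx => hαm x (List.mem_of_mem_drop hx)) (by
            intro x hx
            simp only [List.mem_append, List.mem_cons] at hx
            rcases hx with h | h | h
            · exact hle x (by rw [hls]; simp [List.mem_of_mem_drop h])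
            · omega
            · exact hle x (by rw [hls]; simp [h]))
          have hd1' := decomp (α'.drop k) β' m'
            (fun x hx => hαm' x (List.mem_of_mem_drop hx)) (by
            intro x hx
            simp only [List.mem_append, List.mem_cons] at hx
            rcases hx with h | h | h
            · exact hle' x (by rw [hls']; simp [List.mem_of_mem_drop h])
            · omega
            · exact hle' x (by rw [hls']; simp [h]))
          rw [h1, h1', hd1.2, hd1'.2]
          show BTree.node (Tin (α.drop k)).shape 0 (Tin β).shape =
               BTree.node (Tin (α'.drop k)).shape 0 (Tin β').shape
          rw [ihα.2 k, hshβ]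
        · push_neg at hk
          have h1 : w.drop k = β.drop (k - α.length - 1) := by
            conv_lhs => rw [hls, show k = α.length + (k - α.length) from by omega]
            rw [List.drop_append, drop_cons_pos _ _ _ (by omega)]
            rw [List.drop_eq_nil_of_le (by omega), List.nil_append, Nat.add_sub_cancel_left]
          have h1' : w'.drop k = β'.drop (k - α.length - 1) := by
            conv_lhs => rw [hls', show k = α'.length + (k - α.length) from by omega]
            rw [List.drop_append, drop_cons_pos _ _ _ (by omega)]
            rw [List.drop_eq_nil_of_le (by omega), List.nil_append, Nat.add_sub_cancel_left]
          rw [h1, h1']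
          exact ihβ.2 _

/-- "The last entry is the strict maximum" is determined by the shape of `Tin`. -/
lemma lastmax_iff_shape (w : List ℕ) (hnd : w.Nodup) (k : ℕ) (hk : w.length = k + 1) :
    (∀ x ∈ w.take k, x < w.getD k 0) ↔ ∃ a, (Tin w).shape = BTree.node a 0 BTree.leaf := by
  obtain ⟨α, m, β, hls, hαm, hle, -, hT⟩ := exists_decomp w (by
    intro h; rw [h] at hk; simp at hk)
  have hlw : w.length = α.length + β.length + 1 := by rw [hls]; simp; omega
  constructor
  · intro hlm
    have hβ : β = [] := by
      by_contra hβne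
      have hβlen : 1 ≤ β.length := by
        cases β with
        | nil => exact absurd rfl hβne
        | cons _ _ => simp
      have hmtake : m ∈ w.take k := by
        rw [hls, show k = α.length + (k - α.length) from by omega, List.take_append]
        cases h : k - α.length with
        | zero => omega
        | succ j => simp
      have h1 := hlm m hmtake
      have h2 : w.getD k 0 ∈ w := by
        rw [List.getD_eq_getElem _ _ (show k < w.length by omega)]
        exact List.getElem_mem _
      have h3 := hle _ h2
      omega
    subst hβ
    exact ⟨(Tin α).shape, by rw [hT]; rfl⟩
  · rintro ⟨a, ha⟩
    have hβ : β = [] := by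
      rw [hT] at ha
      have : (Tin β).shape = BTree.leaf := by
        have : BTree.node (Tin α).shape 0 (Tin β).shape = BTree.node a 0 BTree.leaf := ha
        injection this with h1 h2 h3
      rw [shape_eq_leaf_iff] at this
      exact (Tin_eq_leaf_iff β).1 this
    subst hβ
    have hkα : k = α.length := by simp at hlw; omega
    have htake : w.take k = α := by
      rw [hls, hkα, List.take_append_of_le_length (le_refl _), List.take_length]
    have hget : w.getD k 0 = m := by
      rw [hls, hkα, List.getD_append_right α [m] 0 _ (le_refl _)]
      simp
    rw [htake, hget]
    intro x hx
    have h1 := hle x (by rw [hls]; simp [hx])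
    have h2 := hαm x hx
    omega

end SB
namespace SB

lemma Decreasing_node (A B : BTree) (x : ℕ) :
    (BTree.node A x B).Decreasing ↔
      (A.Decreasing ∧ B.Decreasing ∧ (∀ y ∈ A.inorder, y < x) ∧ (∀ y ∈ B.inorder, y < x)) :=
  Iff.rfl

/-- Claim A: whether the postorder labelling of a shape `t` by `w` is decreasing
depends only on the shape of the decreasing tree of `w`. -/
lemma dec_transfer : ∀ (t : BTree) (w w' : List ℕ), w.Nodup → w'.Nodup →
    w.length = tsize t → w'.length = tsize t →
    (Tin w).shape = (Tin w').shape →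
    ((postlabel t w).Decreasing ↔ (postlabel t w').Decreasing) := by
  intro t
  induction t with
  | leaf => intro w w' _ _ _ _ _; exact Iff.rfl
  | node l c r ihl ihr =>
    intro w w' hnd hnd' hlw hlw' hsh
    simp only [tsize] at hlw hlw'
    have key : ∀ (v : List ℕ), v.length = tsize l + tsize r + 1 →
        ((postlabel (BTree.node l c r) v).Decreasing ↔
          ((postlabel l (v.take (tsize l))).Decreasing ∧
           (postlabel r ((v.drop (tsize l)).take (tsize r))).Decreasing ∧
           (∀ x ∈ v.take (tsize l + tsize r), x < v.getD (tsize l + tsize r) 0))) := by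
      intro v hv
      show ((postlabel l (v.take (tsize l))).Decreasing ∧
            (postlabel r ((v.drop (tsize l)).take (tsize r))).Decreasing ∧
            (∀ y ∈ (postlabel l (v.take (tsize l))).inorder, y < v.getD (tsize l + tsize r) 0) ∧
            (∀ y ∈ (postlabel r ((v.drop (tsize l)).take (tsize r))).inorder,
              y < v.getD (tsize l + tsize r) 0)) ↔ _
      have hv1 : (v.take (tsize l)).length = tsize l := by rw [List.length_take]; omega
      have hv2 : ((v.drop (tsize l)).take (tsize r)).length = tsize r := by
        rw [List.length_take, List.length_drop]; omega
      have hmem1 : ∀ x : ℕ, x ∈ (postlabel l (v.take (tsize l))).inorder ↔ x ∈ v.take (tsize l) :=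
        fun x => (inorder_postlabel_perm l (v.take (tsize l)) hv1).mem_iff
      have hmem2 : ∀ x : ℕ, x ∈ (postlabel r ((v.drop (tsize l)).take (tsize r))).inorder ↔
          x ∈ (v.drop (tsize l)).take (tsize r) :=
        fun x => (inorder_postlabel_perm r ((v.drop (tsize l)).take (tsize r)) hv2).mem_iff
      have hsplit : v.take (tsize l + tsize r) =
          v.take (tsize l) ++ (v.drop (tsize l)).take (tsize r) := List.take_add
      constructor
      · rintro ⟨h1, h2, h3, h4⟩
        refine ⟨h1, h2, ?_⟩
        intro x hx
        rw [hsplit, List.mem_append] at hx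
        rcases hx with h | h
        · exact h3 x ((hmem1 x).2 h)
        · exact h4 x ((hmem2 x).2 h)
      · rintro ⟨h1, h2, h3⟩
        refine ⟨h1, h2, ?_, ?_⟩
        · intro y hy
          exact h3 y (by rw [hsplit, List.mem_append]; exact Or.inl ((hmem1 y).1 hy))
        · intro y hy
          exact h3 y (by rw [hsplit, List.mem_append]; exact Or.inr ((hmem2 y).1 hy))
    rw [key w hlw, key w' hlw']
    have htdt := take_drop_transfer w.length w w' hnd hnd' rfl hsh
    have hdrop := htdt.2 (tsize l)
    have htdt2 := take_drop_transfer (w.drop (tsize l)).length (w.drop (tsize l))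
      (w'.drop (tsize l)) (hnd.sublist (List.drop_sublist _ _))
      (hnd'.sublist (List.drop_sublist _ _)) rfl hdrop
    have hc1 := ihl (w.take (tsize l)) (w'.take (tsize l))
      (hnd.sublist (List.take_sublist _ _)) (hnd'.sublist (List.take_sublist _ _))
      (by rw [List.length_take]; omega) (by rw [List.length_take]; omega)
      (htdt.1 (tsize l))
    have hc2 := ihr ((w.drop (tsize l)).take (tsize r)) ((w'.drop (tsize l)).take (tsize r))
      ((hnd.sublist (List.drop_sublist _ _)).sublist (List.take_sublist _ _))
      ((hnd'.sublist (List.drop_sublist _ _)).sublist (List.take_sublist _ _))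
      (by rw [List.length_take, List.length_drop]; omega)
      (by rw [List.length_take, List.length_drop]; omega)
      (htdt2.1 (tsize r))
    have hc3 : (∀ x ∈ w.take (tsize l + tsize r), x < w.getD (tsize l + tsize r) 0) ↔
        (∀ x ∈ w'.take (tsize l + tsize r), x < w'.getD (tsize l + tsize r) 0) := by
      rw [lastmax_iff_shape w hnd _ (by omega), lastmax_iff_shape w' hnd' _ (by omega), hsh]
    rw [hc1, hc2, hc3]

/-- The key step: transporting an S-preimage of `w` to an S-preimage of `w'`
with the same tree shape. -/
lemma key_step (w w' v : List ℕ) (hndw : w.Nodup) (hndw' : w'.Nodup) (hndv : v.Nodup)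
    (hsh : (Tin w).shape = (Tin w').shape) (hSv : stackSort v = w) :
    stackSort ((postlabel (Tin v).shape w').inorder) = w' ∧
      (Tin ((postlabel (Tin v).shape w').inorder)).shape = (Tin v).shape ∧
      ((postlabel (Tin v).shape w').inorder).Perm w' ∧
      (postlabel (Tin ((postlabel (Tin v).shape w').inorder)).shape w).inorder = v := by
  set v' := (postlabel (Tin v).shape w').inorder with hv'def
  have hlenvw : v.length = w.length := by
    have := (stackSort_perm v).length_eq
    rw [hSv] at this
    exact this.symm
  have hlenw : w.length = w'.length := shape_Tin_length_eq hsh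
  have hts : tsize (Tin v).shape = w'.length := by
    rw [tsize_shape, tsize_Tin]; omega
  have hpost : (postlabel (Tin v).shape w').postorder = w' :=
    postorder_postlabel _ _ hts.symm
  have hTinv : postlabel (Tin v).shape w = Tin v := by
    have h1 : (Tin v).postorder = w := by rw [postorder_Tin, hSv]
    have := postlabel_shape_postorder (Tin v)
    rwa [h1] at this
  have hdec : (postlabel (Tin v).shape w').Decreasing := by
    rw [← dec_transfer (Tin v).shape w w' hndw hndw'
      (by rw [tsize_shape, tsize_Tin]; omega) hts.symm hsh]
    rw [hTinv]
    exact Tin_decreasing v hndv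
  have hTv' : Tin v' = postlabel (Tin v).shape w' := Tin_inorder _ hdec
  have hS : stackSort v' = w' := by
    rw [← postorder_Tin, hTv', hpost]
  have hshv' : (Tin v').shape = (Tin v).shape := by
    rw [hTv', shape_postlabel, shape_shape]
  refine ⟨hS, hshv', ?_, ?_⟩
  · have := inorder_postlabel_perm (Tin v).shape w' hts.symm
    exact this
  · rw [hshv', hTinv, inorder_Tin]

end SB
namespace SB

lemma tsize_mir (T : BTree) : tsize (mir T) = tsize T := by
  induction T with
  | leaf => rfl
  | node l n r ihl ihr => simp [mir, tsize, ihl, ihr]; omega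

lemma sorted_lt_range' (n : ℕ) : List.Pairwise (· < ·) (List.range' 1 n) := by
  rw [List.pairwise_iff_getElem]
  intro i j hi hj hij
  simp only [List.getElem_range']
  omega

/-- Finset of permutations of `1..n` as lists. -/
def permsF (n : ℕ) : Finset (List ℕ) := ((List.range' 1 n).permutations).toFinset

lemma mem_permsF {n : ℕ} {θ : List ℕ} : θ ∈ permsF n ↔ θ.Perm (List.range' 1 n) := by
  simp [permsF, List.mem_permutations]

lemma length_of_mem_permsF {n : ℕ} {θ : List ℕ} (h : θ ∈ permsF n) : θ.length = n := by
  have := (mem_permsF.1 h).length_eq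
  simpa using this

lemma nodup_of_mem_permsF {n : ℕ} {θ : List ℕ} (h : θ ∈ permsF n) : θ.Nodup :=
  (mem_permsF.1 h).nodup_iff.2 (List.nodup_range')

lemma applyOps_cons (op : SOp) (ops : List SOp) (θ : List ℕ) :
    applyOps (op :: ops) θ = applyOp op (applyOps ops θ) := rfl

lemma applyOps_perm (ops : List SOp) (θ : List ℕ) : (applyOps ops θ).Perm θ := by
  induction ops with
  | nil => exact List.Perm.refl θ
  | cons op ops ih =>
    rw [applyOps_cons]
    cases op with
    | s => exact (stackSort_perm _).trans ih
    | r => exact (List.reverse_perm _).trans ih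

/-- fiber cardinality of `applyOps ops` over `w`, within permutations of `1..n` -/
def fib (ops : List SOp) (n : ℕ) (w : List ℕ) : ℕ :=
  ((permsF n).filter (fun θ => applyOps ops θ = w)).card

lemma filter_stack_biUnion (ops : List SOp) (n : ℕ) (w : List ℕ) :
    (permsF n).filter (fun θ => stackSort (applyOps ops θ) = w) =
      ((permsF n).filter (fun v => stackSort v = w)).biUnion
        (fun v => (permsF n).filter (fun θ => applyOps ops θ = v)) := by
  ext θ
  simp only [Finset.mem_filter, Finset.mem_biUnion]
  constructor
  · rintro ⟨hθ, hS⟩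
    refine ⟨applyOps ops θ, ⟨?_, hS⟩, hθ, rfl⟩
    exact mem_permsF.2 ((applyOps_perm ops θ).trans (mem_permsF.1 hθ))
  · rintro ⟨v, ⟨hv, hS⟩, hθ, hval⟩
    exact ⟨hθ, by rw [hval]; exact hS⟩

lemma disjoint_fibers (ops : List SOp) (n : ℕ) (x y : List ℕ) (hxy : x ≠ y) :
    Disjoint ((permsF n).filter (fun θ => applyOps ops θ = x))
      ((permsF n).filter (fun θ => applyOps ops θ = y)) := by
  rw [Finset.disjoint_filter]
  intro θ _ hx hy
  exact hxy (hx ▸ hy ▸ rfl)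

lemma fib_congr : ∀ (ops : List SOp) (n : ℕ) (w w' : List ℕ),
    w.Perm (List.range' 1 n) → w'.Perm (List.range' 1 n) →
    (Tin w).shape = (Tin w').shape → fib ops n w = fib ops n w' := by
  intro ops
  induction ops with
  | nil =>
    intro n w w' hw hw' hsh
    unfold fib
    have h1 : ∀ (u : List ℕ), u.Perm (List.range' 1 n) →
        ((permsF n).filter (fun θ => applyOps [] θ = u)).card = 1 := by
      intro u hu
      have he : (permsF n).filter (fun θ => applyOps [] θ = u) =
          (permsF n).filter (fun θ => θ = u) := by
        apply Finset.filter_congr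
        intro θ _
        exact Iff.rfl
      rw [he, Finset.filter_eq', if_pos (mem_permsF.2 hu)]
      rfl
    rw [h1 w hw, h1 w' hw']
  | cons op ops ih =>
    intro n w w' hw hw' hsh
    have hndw : w.Nodup := hw.nodup_iff.2 (List.nodup_range')
    have hndw' : w'.Nodup := hw'.nodup_iff.2 (List.nodup_range')
    cases op with
    | r =>
      unfold fib
      have hrw : ∀ (u : List ℕ), (permsF n).filter (fun θ => applyOps (.r :: ops) θ = u) =
          (permsF n).filter (fun θ => applyOps ops θ = u.reverse) := by
        intro u
        apply Finset.filter_congr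
        intro θ _
        show (applyOps ops θ).reverse = u ↔ applyOps ops θ = u.reverse
        exact List.reverse_eq_iff
      rw [hrw w, hrw w']
      exact ih n w.reverse w'.reverse ((List.reverse_perm w).trans hw)
        ((List.reverse_perm w').trans hw') (by
          rw [Tin_reverse w hndw, Tin_reverse w' hndw', shape_mir, shape_mir, hsh])
    | s =>
      unfold fib
      have hsw : ∀ (u : List ℕ), (permsF n).filter (fun θ => applyOps (.s :: ops) θ = u) =
          (permsF n).filter (fun θ => stackSort (applyOps ops θ) = u) := by
        intro u
        apply Finset.filter_congr
        intro θ _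
        exact Iff.rfl
      rw [hsw w, hsw w', filter_stack_biUnion, filter_stack_biUnion]
      rw [Finset.card_biUnion (fun x _ y _ h => disjoint_fibers ops n x y h),
          Finset.card_biUnion (fun x _ y _ h => disjoint_fibers ops n x y h)]
      refine Finset.sum_nbij' (fun v => (postlabel (Tin v).shape w').inorder)
        (fun v => (postlabel (Tin v).shape w).inorder) ?_ ?_ ?_ ?_ ?_
      · intro v hv
        rw [Finset.mem_filter] at hv ⊢
        obtain ⟨hvP, hvS⟩ := hv
        have hk := key_step w w' v hndw hndw' (nodup_of_mem_permsF hvP) hsh hvS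
        exact ⟨mem_permsF.2 (hk.2.2.1.trans hw'), hk.1⟩
      · intro v hv
        rw [Finset.mem_filter] at hv ⊢
        obtain ⟨hvP, hvS⟩ := hv
        have hk := key_step w' w v hndw' hndw (nodup_of_mem_permsF hvP) hsh.symm hvS
        exact ⟨mem_permsF.2 (hk.2.2.1.trans hw), hk.1⟩
      · intro v hv
        rw [Finset.mem_filter] at hv
        obtain ⟨hvP, hvS⟩ := hv
        exact (key_step w w' v hndw hndw' (nodup_of_mem_permsF hvP) hsh hvS).2.2.2
      · intro v hv
        rw [Finset.mem_filter] at hv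
        obtain ⟨hvP, hvS⟩ := hv
        exact (key_step w' w v hndw' hndw (nodup_of_mem_permsF hvP) hsh.symm hvS).2.2.2
      · intro v hv
        rw [Finset.mem_filter] at hv
        obtain ⟨hvP, hvS⟩ := hv
        have hk := key_step w w' v hndw hndw' (nodup_of_mem_permsF hvP) hsh hvS
        exact ih n v _ (mem_permsF.1 hvP) (hk.2.2.1.trans hw') hk.2.1.symm

lemma card_eq (ops : List SOp) (n : ℕ) :
    ((permsF n).filter (fun θ => applyOps (.s :: ops) θ = List.range' 1 n)).card =
    ((permsF n).filter (fun θ => applyOps (.s :: .r :: ops) θ = List.range' 1 n)).card := by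
  have hnd : (List.range' 1 n).Nodup := List.nodup_range'
  have hlen : (List.range' 1 n).length = n := by simp
  have h1 : (permsF n).filter (fun θ => applyOps (.s :: ops) θ = List.range' 1 n) =
      (permsF n).filter (fun θ => stackSort (applyOps ops θ) = List.range' 1 n) := rfl
  have h2 : (permsF n).filter (fun θ => applyOps (.s :: .r :: ops) θ = List.range' 1 n) =
      (permsF n).filter (fun θ => stackSort (applyOps (.r :: ops) θ) = List.range' 1 n) := rfl
  rw [h1, h2, filter_stack_biUnion, filter_stack_biUnion]
  rw [Finset.card_biUnion (fun x _ y _ h => disjoint_fibers ops n x y h),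
      Finset.card_biUnion (fun x _ y _ h => disjoint_fibers (.r :: ops) n x y h)]
  have hrev : ∀ v : List ℕ, (permsF n).filter (fun θ => applyOps (.r :: ops) θ = v) =
      (permsF n).filter (fun θ => applyOps ops θ = v.reverse) := by
    intro v
    apply Finset.filter_congr
    intro θ _
    show (applyOps ops θ).reverse = v ↔ applyOps ops θ = v.reverse
    exact List.reverse_eq_iff
  have hFibS : ∀ v : List ℕ, v ∈ (permsF n).filter (fun v => stackSort v = List.range' 1 n) ↔
      (v.Perm (List.range' 1 n) ∧ stackSort v = List.range' 1 n) := by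
    intro v
    rw [Finset.mem_filter, mem_permsF]
  have gprop : ∀ v : List ℕ, v.Perm (List.range' 1 n) → stackSort v = List.range' 1 n →
      (((postlabel (mir (Tin v).shape) (List.range' 1 n)).inorder).Perm (List.range' 1 n) ∧
        stackSort ((postlabel (mir (Tin v).shape) (List.range' 1 n)).inorder) = List.range' 1 n ∧
        (Tin ((postlabel (mir (Tin v).shape) (List.range' 1 n)).inorder)).shape =
          mir (Tin v).shape) := by
    intro v hvP hvS
    have hvlen : v.length = n := by simpa using hvP.length_eq
    have hts : tsize (mir (Tin v).shape) = n := by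
      rw [tsize_mir, tsize_shape, tsize_Tin, hvlen]
    have hdec : (postlabel (mir (Tin v).shape) (List.range' 1 n)).Decreasing :=
      sorted_postlabel_decreasing _ _ (by rw [hts, hlen]) (sorted_lt_range' n)
    have hTg : Tin ((postlabel (mir (Tin v).shape) (List.range' 1 n)).inorder) =
        postlabel (mir (Tin v).shape) (List.range' 1 n) := Tin_inorder _ hdec
    refine ⟨?_, ?_, ?_⟩
    · exact inorder_postlabel_perm _ _ (by rw [hts, hlen])
    · rw [← postorder_Tin, hTg, postorder_postlabel _ _ (by rw [hts, hlen])]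
    · rw [hTg, shape_postlabel, shape_mir, shape_shape]
  have hself : ∀ v : List ℕ, v.Perm (List.range' 1 n) → stackSort v = List.range' 1 n →
      (postlabel ((Tin v).shape) (List.range' 1 n)).inorder = v := by
    intro v _ hvS
    have hpv : (Tin v).postorder = List.range' 1 n := by rw [postorder_Tin, hvS]
    have h := postlabel_shape_postorder (Tin v)
    rw [hpv] at h
    rw [h, inorder_Tin]
  calc ∑ u ∈ (permsF n).filter (fun v => stackSort v = List.range' 1 n),
          ((permsF n).filter (fun θ => applyOps ops θ = u)).card
      = ∑ u ∈ (permsF n).filter (fun v => stackSort v = List.range' 1 n),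
          ((permsF n).filter (fun θ => applyOps ops θ = u.reverse)).card := by
        refine Finset.sum_nbij' (fun v => (postlabel (mir (Tin v).shape) (List.range' 1 n)).inorder)
          (fun v => (postlabel (mir (Tin v).shape) (List.range' 1 n)).inorder) ?_ ?_ ?_ ?_ ?_
        · intro v hv
          obtain ⟨hvP, hvS⟩ := (hFibS v).1 hv
          have h := gprop v hvP hvS
          exact (hFibS _).2 ⟨h.1, h.2.1⟩
        · intro v hv
          obtain ⟨hvP, hvS⟩ := (hFibS v).1 hv
          have h := gprop v hvP hvS
          exact (hFibS _).2 ⟨h.1, h.2.1⟩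
        · intro v hv
          obtain ⟨hvP, hvS⟩ := (hFibS v).1 hv
          have h := gprop v hvP hvS
          beta_reduce
          rw [h.2.2, mir_mir]
          exact hself v hvP hvS
        · intro v hv
          obtain ⟨hvP, hvS⟩ := (hFibS v).1 hv
          have h := gprop v hvP hvS
          beta_reduce
          rw [h.2.2, mir_mir]
          exact hself v hvP hvS
        · intro v hv
          obtain ⟨hvP, hvS⟩ := (hFibS v).1 hv
          have h := gprop v hvP hvS
          have hndg : ((postlabel (mir (Tin v).shape) (List.range' 1 n)).inorder).Nodup :=
            h.1.nodup_iff.2 hnd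
          have := fib_congr ops n v
            ((postlabel (mir (Tin v).shape) (List.range' 1 n)).inorder).reverse hvP
            ((List.reverse_perm _).trans h.1)
            (by rw [Tin_reverse _ hndg, shape_mir, h.2.2, mir_mir])
          exact this
    _ = ∑ u ∈ (permsF n).filter (fun v => stackSort v = List.range' 1 n),
          ((permsF n).filter (fun θ => applyOps (.r :: ops) θ = u)).card := by
        refine Finset.sum_congr rfl ?_
        intro v _
        rw [hrev v]

end SB
/-- for any composition `A` of `S` and `R`, there is a
size-preserving bijection between the permutations sorted by `S ∘ A` and
those sorted by `S ∘ R ∘ A`. -/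
theorem sorting_bijection :
    ∀ ops : List SOp, ∃ Φ : List ℕ → List ℕ,
      Set.BijOn Φ
        {θ : List ℕ | θ.Perm (List.range' 1 θ.length) ∧
          stackSort (applyOps ops θ) = List.insertionSort (· ≤ ·) θ}
        {θ : List ℕ | θ.Perm (List.range' 1 θ.length) ∧
          stackSort ((applyOps ops θ).reverse) = List.insertionSort (· ≤ ·) θ} ∧
      ∀ θ : List ℕ, θ.Perm (List.range' 1 θ.length) →
        stackSort (applyOps ops θ) = List.insertionSort (· ≤ ·) θ →
        (Φ θ).length = θ.length := by
  intro ops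
  classical
  let F1 : ℕ → Finset (List ℕ) := fun n =>
    (SB.permsF n).filter (fun θ => applyOps (.s :: ops) θ = List.range' 1 n)
  let F2 : ℕ → Finset (List ℕ) := fun n =>
    (SB.permsF n).filter (fun θ => applyOps (.s :: .r :: ops) θ = List.range' 1 n)
  let E : ∀ n, {x // x ∈ F1 n} ≃ {x // x ∈ F2 n} := fun n =>
    Finset.equivOfCardEq (SB.card_eq ops n)
  let Φ : List ℕ → List ℕ := fun θ =>
    if h : θ ∈ F1 θ.length then ((E θ.length) ⟨θ, h⟩ : {x // x ∈ F2 θ.length}).val else θ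
  have hins : ∀ θ : List ℕ, θ.Perm (List.range' 1 θ.length) →
      List.insertionSort (· ≤ ·) θ = List.range' 1 θ.length := by
    intro θ hθ
    refine List.Perm.eq_of_pairwise' (List.pairwise_insertionSort _ θ) ?_
      ((List.perm_insertionSort _ θ).trans hθ)
    exact (SB.sorted_lt_range' θ.length).imp (fun h => le_of_lt h)
  have hmem1 : ∀ θ : List ℕ,
      (θ.Perm (List.range' 1 θ.length) ∧
        stackSort (applyOps ops θ) = List.insertionSort (· ≤ ·) θ) ↔ θ ∈ F1 θ.length := by
    intro θ
    constructor
    · rintro ⟨hp, hs⟩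
      refine Finset.mem_filter.2 ⟨SB.mem_permsF.2 hp, ?_⟩
      show stackSort (applyOps ops θ) = _
      rw [hs, hins θ hp]
    · intro h
      obtain ⟨hP, hs⟩ := Finset.mem_filter.1 h
      have hp := SB.mem_permsF.1 hP
      refine ⟨hp, ?_⟩
      rw [hins θ hp]
      exact hs
  have hmem2 : ∀ θ : List ℕ,
      (θ.Perm (List.range' 1 θ.length) ∧
        stackSort ((applyOps ops θ).reverse) = List.insertionSort (· ≤ ·) θ) ↔
        θ ∈ F2 θ.length := by
    intro θ
    constructor
    · rintro ⟨hp, hs⟩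
      refine Finset.mem_filter.2 ⟨SB.mem_permsF.2 hp, ?_⟩
      show stackSort ((applyOps ops θ).reverse) = _
      rw [hs, hins θ hp]
    · intro h
      obtain ⟨hP, hs⟩ := Finset.mem_filter.1 h
      have hp := SB.mem_permsF.1 hP
      refine ⟨hp, ?_⟩
      rw [hins θ hp]
      exact hs
  have hlen1 : ∀ {n : ℕ} {θ : List ℕ}, θ ∈ F1 n → θ.length = n := by
    intro n θ h
    exact SB.length_of_mem_permsF (Finset.mem_filter.1 h).1
  have hlen2 : ∀ {n : ℕ} {θ : List ℕ}, θ ∈ F2 n → θ.length = n := by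
    intro n θ h
    exact SB.length_of_mem_permsF (Finset.mem_filter.1 h).1
  have hspec : ∀ (θ : List ℕ) (n : ℕ) (hn : θ.length = n) (h : θ ∈ F1 n),
      Φ θ = ((E n) ⟨θ, h⟩ : {x // x ∈ F2 n}).val := by
    intro θ n hn h
    subst hn
    show (if h' : θ ∈ F1 θ.length then ((E θ.length) ⟨θ, h'⟩ : {x // x ∈ F2 θ.length}).val else θ) = _
    rw [dif_pos h]
  have hΦlen : ∀ (θ : List ℕ), θ ∈ F1 θ.length → (Φ θ).length = θ.length := by
    intro θ h
    rw [hspec θ θ.length rfl h]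
    exact hlen2 ((E θ.length) ⟨θ, h⟩).2
  refine ⟨Φ, ⟨?_, ?_, ?_⟩, ?_⟩
  · -- MapsTo
    intro θ hθ
    have h1 : θ ∈ F1 θ.length := (hmem1 θ).1 hθ
    have h2 : Φ θ ∈ F2 θ.length := by
      rw [hspec θ θ.length rfl h1]
      exact ((E θ.length) ⟨θ, h1⟩).2
    have hl : (Φ θ).length = θ.length := hΦlen θ h1
    exact (hmem2 (Φ θ)).2 (by rw [hl]; exact h2)
  · -- InjOn
    intro θ1 hθ1 θ2 hθ2 hΦeq
    have h1 : θ1 ∈ F1 θ1.length := (hmem1 θ1).1 hθ1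
    have h2 : θ2 ∈ F1 θ2.length := (hmem1 θ2).1 hθ2
    have hl : θ1.length = θ2.length := by
      have e1 := hΦlen θ1 h1
      have e2 := hΦlen θ2 h2
      rw [← e1, ← e2, hΦeq]
    have h2' : θ2 ∈ F1 θ1.length := by rw [hl]; exact h2
    have hs1 := hspec θ1 θ1.length rfl h1
    have hs2 := hspec θ2 θ1.length hl.symm h2'
    rw [hs1, hs2] at hΦeq
    have := (E θ1.length).injective (Subtype.ext hΦeq)
    exact congrArg Subtype.val this
  · -- SurjOn
    intro θ' hθ'
    have h2 : θ' ∈ F2 θ'.length := (hmem2 θ').1 hθ'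
    set x := (E θ'.length).symm ⟨θ', h2⟩ with hx
    have hθmem : (x : List ℕ) ∈ F1 θ'.length := x.2
    have hlenx : (x : List ℕ).length = θ'.length := hlen1 hθmem
    refine ⟨(x : List ℕ), ?_, ?_⟩
    · apply (hmem1 (x : List ℕ)).2
      rw [hlenx]
      exact hθmem
    · rw [hspec (x : List ℕ) θ'.length hlenx hθmem]
      have : (⟨(x : List ℕ), hθmem⟩ : {v // v ∈ F1 θ'.length}) = x := Subtype.ext rfl
      rw [this, hx, Equiv.apply_symm_apply]
  · -- length preservation
    intro θ hp hs
    exact hΦlen θ ((hmem1 θ).1 ⟨hp, hs⟩)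
end

section
/- For every n ≥ 1, the permutation λ_n (and likewise ρ_n) is a fixed point of the bijection P: P(λ_n) = λ_n and P(ρ_n) = ρ_n. Moreover λ_n is ⊕-indecomposable and ρ_n is ⊖-indecomposable. -/
lemma lamP_succ (n : ℕ) : lamP (n + 1) = (1 + (rhoP n).length) :: rhoP n := by
  simp [lamP, rhoP, lrP, ossum]

lemma rhoP_succ (n : ℕ) : rhoP (n + 1) = lamP n ++ [1 + (lamP n).length] := by
  simp [lamP, rhoP, lrP, osum]

lemma lamP_rhoP_len : ∀ n, (lamP n).length = n ∧ (rhoP n).length = n := by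
  intro n
  induction n with
  | zero => exact ⟨rfl, rfl⟩
  | succ n ih =>
    rw [lamP_succ, rhoP_succ]
    simp [ih.1, ih.2, Nat.add_comm]

lemma lamP_succ' (n : ℕ) : lamP (n + 1) = (n + 1) :: rhoP n := by
  rw [lamP_succ, (lamP_rhoP_len n).2, Nat.add_comm]

lemma rhoP_succ' (n : ℕ) : rhoP (n + 1) = lamP n ++ [n + 1] := by
  rw [rhoP_succ, (lamP_rhoP_len n).1, Nat.add_comm]

lemma lamP_rhoP_perm : ∀ n, (lamP n).Perm (List.range' 1 n)
    ∧ (rhoP n).Perm (List.range' 1 n) := by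
  intro n
  induction n with
  | zero => exact ⟨List.Perm.refl _, List.Perm.refl _⟩
  | succ n ih =>
    rw [lamP_succ', rhoP_succ']
    have hr : List.range' 1 (n + 1) = List.range' 1 n ++ [n + 1] := by
      rw [List.range'_concat]; norm_num [Nat.add_comm]
    constructor
    · rw [hr]
      exact ((ih.2.cons (n+1)).trans (List.perm_append_singleton _ _).symm)
    · rw [hr]
      exact ih.1.append_right _

lemma mem_lamP_le {n x : ℕ} (hx : x ∈ lamP n) : x ≤ n := by
  have := ((lamP_rhoP_perm n).1.mem_iff).1 hx
  simp [List.mem_range'] at this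
  omega

lemma mem_rhoP_le {n x : ℕ} (hx : x ∈ rhoP n) : x ≤ n := by
  have := ((lamP_rhoP_perm n).2.mem_iff).1 hx
  simp [List.mem_range'] at this
  omega

lemma foldr_max_of_le {l : List ℕ} {c : ℕ} (h : ∀ x ∈ l, x ≤ c) :
    l.foldr max c = c := by
  induction l with
  | nil => rfl
  | cons a t ih =>
    simp only [List.foldr_cons, ih (fun x hx => h x (List.mem_cons_of_mem a hx))]
    exact Nat.max_eq_right (h a (List.mem_cons_self))

lemma foldr_max_zero_concat {l : List ℕ} {m : ℕ} (h : ∀ x ∈ l, x ≤ m) :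
    (l ++ [m]).foldr max 0 = m := by
  rw [List.foldr_append]
  simp only [List.foldr_cons, List.foldr_nil, Nat.max_zero]
  exact foldr_max_of_le h

lemma takeWhile_concat {l : List ℕ} {m : ℕ} (h : ∀ x ∈ l, x ≠ m) :
    (l ++ [m]).takeWhile (· ≠ m) = l ∧ (l ++ [m]).dropWhile (· ≠ m) = [m] := by
  induction l with
  | nil => simp
  | cons a t ih =>
    have ha : a ≠ m := h a (List.mem_cons_self)
    have := ih (fun x hx => h x (List.mem_cons_of_mem a hx))
    simp only [List.cons_append, List.takeWhile_cons, List.dropWhile_cons, ha,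
      decide_eq_true_eq, if_pos, this.1, this.2]
    simp [ha]

lemma ppermAux_nil (fuel : ℕ) : PpermAux fuel [] = [] := by
  cases fuel <;> rfl

lemma ppermAux_nonnil (fuel : ℕ) (l : List ℕ) (h : l ≠ []) :
    PpermAux (fuel + 1) l =
      (PpermAux fuel (l.takeWhile (· ≠ l.foldr max 0))).map
          (· + ((l.dropWhile (· ≠ l.foldr max 0)).tail).length) ++
        [l.foldr max 0] ++
        PpermAux fuel (((l.dropWhile (· ≠ l.foldr max 0)).tail).map
          (· - (l.takeWhile (· ≠ l.foldr max 0)).length)) := by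
  cases l with
  | nil => exact absurd rfl h
  | cons x xs => rfl

lemma foldr_max_le {l : List ℕ} {c : ℕ} (h : ∀ x ∈ l, x ≤ c) :
    l.foldr max 0 ≤ c := by
  induction l with
  | nil => simp
  | cons a t ih =>
    simp only [List.foldr_cons, Nat.max_le]
    exact ⟨h a (List.mem_cons_self),
      ih (fun x hx => h x (List.mem_cons_of_mem a hx))⟩

lemma pperm_fix : ∀ n, Pperm (lamP n) = lamP n ∧ Pperm (rhoP n) = rhoP n := by
  intro n
  induction n with
  | zero => exact ⟨rfl, rfl⟩
  | succ n ih =>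
    have hlen := lamP_rhoP_len n
    constructor
    · -- λ case
      rw [lamP_succ']
      have hlen' : ((n+1) :: rhoP n).length = n + 1 := by simp [hlen.2]
      rw [Pperm, hlen', ppermAux_nonnil _ _ (by simp)]
      have hmax : ((n+1) :: rhoP n).foldr max 0 = n + 1 := by
        simp only [List.foldr_cons]
        have : (rhoP n).foldr max 0 ≤ n := foldr_max_le (fun x hx => mem_rhoP_le hx)
        omega
      rw [hmax]
      have htw : ((n+1) :: rhoP n).takeWhile (· ≠ n+1) = [] := by
        simp [List.takeWhile_cons]
      have hdw : ((n+1) :: rhoP n).dropWhile (· ≠ n+1) = (n+1) :: rhoP n := by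
        simp [List.dropWhile_cons]
      rw [htw, hdw]
      simp only [List.tail_cons, List.length_nil, Nat.sub_zero, List.map_id',
        ppermAux_nil, List.map_nil, List.nil_append]
      rw [show PpermAux n (rhoP n) = Pperm (rhoP n) by rw [Pperm, hlen.2]]
      rw [ih.2]
      rfl
    · -- ρ case
      rw [rhoP_succ']
      have hne : lamP n ++ [n+1] ≠ [] := by simp
      have hlen' : (lamP n ++ [n+1]).length = n + 1 := by simp [hlen.1]
      rw [Pperm, hlen', ppermAux_nonnil _ _ hne]
      have hub : ∀ x ∈ lamP n, x ≤ n + 1 := fun x hx => (mem_lamP_le hx).trans (by omega)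
      have hmax : (lamP n ++ [n+1]).foldr max 0 = n + 1 := foldr_max_zero_concat hub
      have hne' : ∀ x ∈ lamP n, x ≠ n + 1 := by
        intro x hx
        have := mem_lamP_le hx; omega
      have htd := takeWhile_concat hne'
      rw [hmax, htd.1, htd.2]
      simp only [List.tail_cons, List.length_nil, List.map_nil, ppermAux_nil,
        List.append_nil, Nat.add_zero, List.map_id']
      rw [show PpermAux n (lamP n) = Pperm (lamP n) by rw [Pperm, hlen.1]]
      rw [ih.1]

lemma mem_perm_range_le {l : List ℕ} {x : ℕ}
    (hp : l.Perm (List.range' 1 l.length)) (hx : x ∈ l) : x ≤ l.length := by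
  have := hp.mem_iff.1 hx
  simp [List.mem_range'] at this
  omega
/-- `λ_n` and `ρ_n` are fixed points of `P`; moreover `λ_n` is
`⊕`-indecomposable and `ρ_n` is `⊖`-indecomposable. -/
theorem lamP_rhoP_fixed_points :
    ∀ n : ℕ, 1 ≤ n →
      Pperm (lamP n) = lamP n ∧ Pperm (rhoP n) = rhoP n ∧
      (¬ ∃ α β : List ℕ, α ≠ [] ∧ β ≠ [] ∧
        α.Perm (List.range' 1 α.length) ∧ β.Perm (List.range' 1 β.length) ∧
        lamP n = osum α β) ∧
      (¬ ∃ α β : List ℕ, α ≠ [] ∧ β ≠ [] ∧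
        α.Perm (List.range' 1 α.length) ∧ β.Perm (List.range' 1 β.length) ∧
        rhoP n = ossum α β) := by
  rintro n hn
  refine ⟨(pperm_fix n).1, (pperm_fix n).2, ?_, ?_⟩
  · rintro ⟨α, β, hα, hβ, hpα, hpβ, heq⟩
    obtain ⟨k, rfl⟩ : ∃ k, n = k + 1 := ⟨n - 1, by omega⟩
    rw [lamP_succ', osum] at heq
    obtain ⟨a, as, rfl⟩ := List.exists_cons_of_ne_nil hα
    have hhead : a = k + 1 := by
      have := congrArg (List.headD · 0) heq
      simpa using this.symm
    have halen : (a :: as).length + β.length = k + 1 := by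
      have := congrArg List.length heq
      simp [(lamP_rhoP_len k).2] at this
      simp
      omega
    have hb : 1 ≤ β.length := List.length_pos_iff.2 hβ
    have ha := mem_perm_range_le hpα (List.mem_cons_self)
    simp only [List.length_cons] at ha halen
    omega
  · rintro ⟨α, β, hα, hβ, hpα, hpβ, heq⟩
    obtain ⟨k, rfl⟩ : ∃ k, n = k + 1 := ⟨n - 1, by omega⟩
    rw [rhoP_succ', ossum] at heq
    have hne : α.map (· + β.length) ++ β ≠ [] := by simp [hβ]
    have hlast : (α.map (· + β.length) ++ β).getLast hne = β.getLast hβ := by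
      rw [List.getLast_append]
      simp [hβ]
    have hlast2 : (lamP k ++ [k+1]).getLast (by simp) = k + 1 := List.getLast_concat
    have hbmem := mem_perm_range_le hpβ (List.getLast_mem hβ)
    have halen : α.length + β.length = k + 1 := by
      have := congrArg List.length heq
      simp [(lamP_rhoP_len k).1] at this
      omega
    have ha : 1 ≤ α.length := List.length_pos_iff.2 hα
    have : k + 1 = β.getLast hβ := by
      rw [← hlast2, ← hlast]
      congr 1
    omega
end

section
/- For every permutation σ, the Zeilberger statistic does not decrease under stack sorting applied in reverse orientation: Rzeil(S(σ)) ≥ Rzeil(σ), where Rzeil(π) is the largest k such that (n−k+1)(n−k+2)…n occurs as a (not necessarily consecutive) subword of π, n being the length of π. -/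
lemma le_foldr_max {l : List ℕ} {a : ℕ} (h : a ∈ l) : a ≤ l.foldr max 0 := by
  induction l with
  | nil => simp at h
  | cons b t ih =>
    simp only [List.foldr_cons]
    rcases List.mem_cons.1 h with rfl | h
    · exact le_max_left _ _
    · exact le_trans (ih h) (le_max_right _ _)

lemma split_max {l : List ℕ} {m : ℕ} (hm : m ∈ l) :
    l = l.takeWhile (· ≠ m) ++ m :: (l.dropWhile (· ≠ m)).tail := by
  induction l with
  | nil => simp at hm
  | cons a t ih =>
    by_cases ha : a = m
    · subst ha; simp
    · have hm' : m ∈ t := by rcases List.mem_cons.1 hm with rfl | h; exact absurd rfl ha; exact h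
      have hb : decide (a ≠ m) = true := by simpa using ha
      rw [List.takeWhile_cons, List.dropWhile_cons, hb, if_pos rfl, if_pos rfl,
        List.cons_append]
      exact congrArg (a :: ·) (ih hm')

lemma foldr_max_mem (x : ℕ) (xs : List ℕ) : (x :: xs).foldr max 0 ∈ x :: xs := by
  induction xs generalizing x with
  | nil => simp
  | cons b t ih =>
    simp only [List.foldr_cons] at *
    rcases le_total x (max b (t.foldr max 0)) with h | h
    · rw [max_eq_right h]; exact List.mem_cons_of_mem _ (ih b)
    · rw [max_eq_left h]; exact List.mem_cons_self

lemma stackSortAux_perm : ∀ fuel (l : List ℕ), l.length ≤ fuel →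
    (stackSortAux fuel l).Perm l := by
  intro fuel
  induction fuel with
  | zero => intro l hl; interval_cases h : l.length
            · rw [List.length_eq_zero_iff] at h; simp [h, stackSortAux]
  | succ n ih =>
    intro l hl
    match l with
    | [] => simp [stackSortAux]
    | x :: xs =>
      set m := (x :: xs).foldr max 0 with hmdef
      have hm : m ∈ x :: xs := foldr_max_mem x xs
      have hsplit := split_max hm
      set α := (x :: xs).takeWhile (· ≠ m) with hα
      set β := ((x :: xs).dropWhile (· ≠ m)).tail with hβ
      have hlen : (x :: xs).length = α.length + 1 + β.length := by
        rw [hsplit]; simp; omega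
      have hα' : α.length ≤ n := by omega
      have hβ' : β.length ≤ n := by omega
      show (stackSortAux n α ++ stackSortAux n β ++ [m]).Perm (x :: xs)
      have h1 : (stackSortAux n α ++ stackSortAux n β ++ [m]).Perm (α ++ β ++ [m]) :=
        ((ih α hα').append (ih β hβ')).append_right _
      have h2 : (α ++ β ++ [m]).Perm (α ++ (m :: β)) := by
        rw [List.append_assoc]
        exact (List.perm_append_singleton m β).append_left α
      exact (h1.trans h2).trans (by rw [← hsplit])

lemma sublist_stackSortAux : ∀ fuel (l s : List ℕ), l.length ≤ fuel → l.Nodup →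
    s.Sublist l → s.Pairwise (· < ·) →
    (∀ x ∈ l, x ∉ s → ∀ y ∈ s, x < y) →
    s.Sublist (stackSortAux fuel l) := by
  intro fuel
  induction fuel with
  | zero =>
    intro l s hl _ hs _ _
    have : l = [] := List.length_eq_zero_iff.1 (by omega)
    subst this
    simpa [stackSortAux] using hs
  | succ n ih =>
    intro l s hl hnd hs hchain hcond
    match l with
    | [] => simp [stackSortAux]; simpa using hs
    | x :: xs =>
      set m := (x :: xs).foldr max 0 with hmdef
      have hm : m ∈ x :: xs := foldr_max_mem x xs
      have hmax : ∀ a ∈ x :: xs, a ≤ m := fun a ha => le_foldr_max ha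
      have hsplit := split_max hm
      set α := (x :: xs).takeWhile (· ≠ m) with hα
      set β := ((x :: xs).dropWhile (· ≠ m)).tail with hβ
      have hlen : (x :: xs).length = α.length + 1 + β.length := by
        rw [hsplit]; simp; omega
      have hα' : α.length ≤ n := by omega
      have hndα : α.Nodup ∧ m ∉ α ∧ m ∉ β := by
        rw [hsplit] at hnd
        simp [List.nodup_append] at hnd
        refine ⟨hnd.1, ?_, hnd.2.1.1⟩
        intro h
        exact (hnd.2.2 m h).1 rfl
      by_cases hmem : m ∈ s
      case neg =>
        -- s must be empty
        match s with
        | [] => exact List.nil_sublist _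
        | a :: t =>
          have h1 : m < a := hcond m hm hmem a (List.mem_cons_self)
          have h2 : a ≤ m := hmax a (hs.subset (List.mem_cons_self))
          omega
      case pos =>
        rw [hsplit] at hs
        obtain ⟨t₁, t₂, hst, ht₁, ht₂⟩ := List.sublist_append_iff.1 hs
        have hmt₂ : m ∈ t₂ := by
          rcases List.mem_append.1 (hst ▸ hmem) with h | h
          · exact absurd (ht₁.subset h) hndα.2.1
          · exact h
        rcases List.sublist_cons_iff.1 ht₂ with h | ⟨t', rfl, ht'⟩
        · exact absurd (h.subset hmt₂) hndα.2.2
        · -- t₂ = m :: t'; t' must be empty since s pairwise < and all ≤ m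
          have ht'nil : t' = [] := by
            match t' with
            | [] => rfl
            | b :: u =>
              have hb : m < b := by
                rw [hst] at hchain
                have := (List.pairwise_append.1 hchain).2.2
                -- elements of m::b::u pairwise
                have h2 := List.pairwise_cons.1 (List.pairwise_append.1 hchain).2.1
                exact h2.1 b (List.mem_cons_self)
              have hb2 : b ≤ m := hmax b (by
                rw [hsplit]
                exact List.mem_append.2 (Or.inr (List.mem_cons_of_mem _
                  (ht'.subset (List.mem_cons_self)))))
              omega
          subst ht'nil
          have hs' : t₁.Sublist (stackSortAux n α) := by
            apply ih α t₁ hα' hndα.1 ht₁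
            · exact (hst ▸ hchain).sublist (List.sublist_append_left _ _)
            · intro z hz hzt y hy
              have hzl : z ∈ x :: xs := by rw [hsplit]; exact List.mem_append_left _ hz
              have hzm : z ≠ m := fun h => hndα.2.1 (h ▸ hz)
              have hzs : z ∉ s := by
                rw [hst]
                simp only [List.mem_append, List.mem_cons, List.not_mem_nil, or_false]
                rintro (h | h)
                · exact hzt h
                · exact hzm h
              exact hcond z hzl hzs y (hst ▸ List.mem_append_left _ hy)
          show s.Sublist (stackSortAux n α ++ stackSortAux n β ++ [m])
          rw [hst, List.append_assoc]
          exact hs'.append (List.sublist_append_right _ _)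

theorem rzeil_stackSort_ge' :
    ∀ σ : List ℕ, σ.Perm (List.range' 1 σ.length) →
      sSup {k | (List.range' (σ.length - k + 1) k).Sublist σ} ≤
      sSup {k | (List.range' ((stackSort σ).length - k + 1) k).Sublist (stackSort σ)} := by
  intro σ hperm
  set n := σ.length with hn
  have hperm' : (stackSort σ).Perm σ := stackSortAux_perm n σ le_rfl
  have hlen : (stackSort σ).length = n := hperm'.length_eq
  have hnd : σ.Nodup := hperm.nodup_iff.2 (by exact List.nodup_range' (s := _) (n := _))
  apply csSup_le_csSup
  · exact ⟨n, fun k hk => by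
      have := List.Sublist.length_le hk
      simp [hlen] at this
      exact this⟩
  · exact ⟨0, by simp⟩
  · intro k hk
    simp only [Set.mem_setOf_eq] at hk ⊢
    have hkn : k ≤ n := by have := hk.length_le; simpa using this
    rw [hlen]
    apply sublist_stackSortAux n σ _ le_rfl hnd hk
    · exact List.pairwise_lt_range' (s := _) (n := _)
    · intro x hx hxs y hy
      have hxr : x ∈ List.range' 1 n := hperm.subset hx
      rw [List.mem_range'_1] at hxr hy
      simp only [List.mem_range'_1, not_and, not_lt] at hxs
      omega

/-- `Rzeil(S(σ)) ≥ Rzeil(σ)` for every permutation `σ`. -/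
theorem rzeil_stackSort_ge :
    ∀ σ : List ℕ, σ.Perm (List.range' 1 σ.length) →
      Rzeil σ ≤ Rzeil (stackSort σ) := by
  intro σ h
  unfold Rzeil
  exact rzeil_stackSort_ge' σ h
end
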